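/- arXiv:1707.05282 — 7 statements merged into one kernel-verified Lean document; each statement's English description precedes it below -/
import Mathlib

section
/- If A is a d×d Hermitian matrix with non-negative diagonal entries and its comparison matrix M(A) is positive semidefinite, then A is positive semidefinite. -/
open Matrix BigOperators ComplexOrder

noncomputable section

/-- comparison matrix: `M(A)_ii = |A_ii|`, `M(A)_ij = -|A_ij|` for `i ≠ j` -/
def compMatrix {d : ℕ} (A : Matrix (Fin d) (Fin d) ℂ) : Matrix (Fin d) (Fin d) ℂ :=
  fun i j => if i = j then (‖A i i‖ : ℂ) else -(‖A i j‖ : ℂ)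

/-- If a Hermitian matrix with non-negative diagonal has positive semidefinite
comparison matrix, then it is itself positive semidefinite. -/
theorem stmt_1 {d : ℕ} (A : Matrix (Fin d) (Fin d) ℂ) (hA : A.IsHermitian)
    (hdiag : ∀ i, 0 ≤ A i i)
    (hM : (compMatrix A).PosSemidef) :
    A.PosSemidef := by
  refine .of_dotProduct_mulVec_nonneg hA fun x => ?_
  set z : ℂ := star x ⬝ᵥ A *ᵥ x with hz
  -- z is self-adjoint
  have hself : star z = z := by
    rw [hz, ← star_dotProduct_star, star_star, star_mulVec, hA.eq, ← dotProduct_mulVec]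
  have him : z.im = 0 := by
    have := congrArg Complex.im hself
    simp only [Complex.star_def, Complex.conj_im] at this
    linarith
  -- the comparison quadratic form with the vector of norms
  set y : Fin d → ℂ := fun i => (‖x i‖ : ℂ) with hy
  have hsy : star y = y := by funext i; simp [hy]
  have hMy := hM.dotProduct_mulVec_nonneg y
  rw [hsy] at hMy
  have hMyre : 0 ≤ (y ⬝ᵥ (compMatrix A) *ᵥ y).re := by
    have := (Complex.le_def.mp hMy).1
    simpa using this
  -- rewrite both quadratic forms as double sums of real parts
  have hzre : z.re = ∑ i, ∑ j, ((starRingEnd ℂ) (x i) * A i j * x j).re := by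
    rw [hz]
    simp only [dotProduct, mulVec, Pi.star_apply, Complex.star_def, Finset.mul_sum,
      Complex.re_sum, dotProduct]
    congr 1; funext i; congr 1; funext j; ring_nf
  have hMyre' : (y ⬝ᵥ (compMatrix A) *ᵥ y).re
      = ∑ i, ∑ j, (y i * compMatrix A i j * y j).re := by
    simp only [dotProduct, mulVec, Finset.mul_sum, Complex.re_sum]
    congr 1; funext i; congr 1; funext j; ring_nf
  -- termwise comparison
  have key : ∀ i j, (y i * compMatrix A i j * y j).re
      ≤ ((starRingEnd ℂ) (x i) * A i j * x j).re := by
    intro i j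
    by_cases h : i = j
    · subst h
      have h0 := hdiag i
      rw [Complex.nonneg_iff] at h0
      have hnorm : ‖A i i‖ = (A i i).re := by
        rw [Complex.norm_def, Complex.normSq_apply, ← h0.2]
        simp [Real.sqrt_mul_self h0.1]
      have hc : (starRingEnd ℂ) (x i) * A i i * x i = A i i * ((‖x i‖ ^ 2 : ℝ) : ℂ) := by
        rw [mul_comm ((starRingEnd ℂ) (x i)) (A i i), mul_assoc]
        congr 1
        rw [mul_comm, Complex.mul_conj]
        norm_cast
        simp [Complex.normSq_eq_norm_sq]
      rw [hc]
      simp only [hy, compMatrix, if_pos rfl]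
      apply le_of_eq
      push_cast
      simp [Complex.mul_re, ← h0.2, hnorm, ← Complex.ofReal_pow]
      ring
    · have hnormle : -‖(starRingEnd ℂ) (x i) * A i j * x j‖
          ≤ ((starRingEnd ℂ) (x i) * A i j * x j).re := by
        have := Complex.abs_re_le_norm ((starRingEnd ℂ) (x i) * A i j * x j)
        cases abs_le.mp this with
        | intro h1 h2 => linarith
      have heq : (y i * compMatrix A i j * y j).re
          = -‖(starRingEnd ℂ) (x i) * A i j * x j‖ := by
        simp only [hy, compMatrix, if_neg h]
        rw [norm_mul, norm_mul]
        rw [Complex.mul_re, Complex.mul_re]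
        simp [RCLike.norm_conj]
        try ring
      rw [heq]; exact hnormle
  have hle : (y ⬝ᵥ (compMatrix A) *ᵥ y).re ≤ z.re := by
    rw [hzre, hMyre']
    exact Finset.sum_le_sum fun i _ => Finset.sum_le_sum fun j _ => key i j
  rw [Complex.le_def]
  constructor
  · simp only [Complex.zero_re]
    linarith
  · simp [him]
end
end

section
/- A Hermitian matrix A with non-negative diagonal has the property that ω∘A is positive semidefinite for every Hermitian matrix ω with all entries of unit modulus and diagonal entries equal to 1, if and only if the comparison matrix M(A) is positive semidefinite. -/
open Matrix BigOperators ComplexOrder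

noncomputable section

/-- A Hermitian matrix `A` with non-negative diagonal is such that `ω ∘ A` is positive
semidefinite for every Hermitian `ω` with unit-modulus entries and unit diagonal, if and
only if the comparison matrix `M(A)` is positive semidefinite. -/
theorem stmt_2 {d : ℕ} (A : Matrix (Fin d) (Fin d) ℂ) (hA : A.IsHermitian)
    (hdiag : ∀ i, 0 ≤ A i i) :
    (∀ ω : Matrix (Fin d) (Fin d) ℂ, ω.IsHermitian → (∀ i j, ‖ω i j‖ = 1) →
        (∀ i, ω i i = 1) → (Matrix.hadamard ω A).PosSemidef)
      ↔ (compMatrix A).PosSemidef := by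
  have hdiag' : ∀ i, A i i = (‖A i i‖ : ℂ) := fun i => Complex.eq_coe_norm_of_nonneg (hdiag i)
  have hsymm : ∀ i j, A j i = (starRingEnd ℂ) (A i j) := by
    intro i j; rw [← hA.apply j i]; rfl
  have hnorm : ∀ i j, ‖A j i‖ = ‖A i j‖ := by
    intro i j; rw [hsymm i j]; simp
  constructor
  · intro h
    set ω : Matrix (Fin d) (Fin d) ℂ := fun i j =>
      if i = j then 1 else if A i j = 0 then -1 else -(starRingEnd ℂ) (A i j) / ‖A i j‖ with hωdef
    have hzero : ∀ i j, A i j = 0 ↔ A j i = 0 := by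
      intro i j; rw [hsymm i j]; simp
    have hherm : ω.IsHermitian := by
      ext i j
      rw [conjTranspose_apply]; simp only [hωdef]
      by_cases hij : i = j
      · subst hij; simp
      · rw [if_neg (Ne.symm hij), if_neg hij]
        by_cases h0 : A i j = 0
        · rw [if_pos ((hzero i j).mp h0), if_pos h0]; simp
        · rw [if_neg (fun hc => h0 ((hzero i j).mpr hc)), if_neg h0]
          rw [hsymm i j]
          simp [star_div₀, RCLike.norm_conj]
    have hunit : ∀ i j, ‖ω i j‖ = 1 := by
      intro i j
      simp only [hωdef]
      by_cases hij : i = j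
      · simp [hij]
      · rw [if_neg hij]
        by_cases h0 : A i j = 0
        · simp [h0]
        · rw [if_neg h0]
          have hn : ‖A i j‖ ≠ 0 := by simpa using h0
          rw [norm_div, norm_neg, RCLike.norm_conj, Complex.norm_real, norm_norm,
            div_self hn]
    have hdω : ∀ i, ω i i = 1 := by intro i; simp [hωdef]
    have heq : Matrix.hadamard ω A = compMatrix A := by
      ext i j
      simp only [Matrix.hadamard_apply, compMatrix]; simp only [hωdef]
      by_cases hij : i = j
      · subst hij
        rw [if_pos rfl, if_pos rfl, one_mul]
        exact hdiag' i
      · rw [if_neg hij, if_neg hij]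
        by_cases h0 : A i j = 0
        · simp [h0]
        · rw [if_neg h0]
          have hn : (‖A i j‖ : ℂ) ≠ 0 := by simpa using h0
          have hc : (starRingEnd ℂ) (A i j) * A i j = ((‖A i j‖ : ℂ)) ^ 2 := by
            rw [RCLike.conj_mul]; norm_cast
          rw [div_mul_eq_mul_div, neg_mul, hc, pow_two, neg_div, mul_div_assoc,
            div_self hn, mul_one]
    rw [← heq]
    exact h ω hherm hunit hdω
  · intro hM ω hω hunit hdω
    have hadh : (Matrix.hadamard ω A).IsHermitian := by
      ext i j
      simp only [conjTranspose_apply, Matrix.hadamard_apply, star_mul']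
      rw [hω.apply, hA.apply]
    refine Matrix.posSemidef_iff_dotProduct_mulVec.mpr ⟨hadh, fun x => ?_⟩
    set M := Matrix.hadamard ω A with hMdef
    have hreal : (starRingEnd ℂ) (star x ⬝ᵥ M *ᵥ x) = star x ⬝ᵥ M *ᵥ x := by
      show star (star x ⬝ᵥ M *ᵥ x) = _
      conv_lhs => rw [star_dotProduct, star_star, star_mulVec, hadh.eq, ← dotProduct_mulVec]
    set y : Fin d → ℂ := fun i => (‖x i‖ : ℂ) with hydef
    have hy : star y = y := by
      funext i; simp [hydef]
    have h0 : 0 ≤ star y ⬝ᵥ compMatrix A *ᵥ y := hM.dotProduct_mulVec_nonneg y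
    have h0re : 0 ≤ (star y ⬝ᵥ compMatrix A *ᵥ y).re := by
      rw [Complex.le_def] at h0; exact h0.1
    have hle : (star y ⬝ᵥ compMatrix A *ᵥ y).re ≤ (star x ⬝ᵥ M *ᵥ x).re := by
      have e1 : (star x ⬝ᵥ M *ᵥ x).re
          = ∑ i, ∑ j, ((starRingEnd ℂ) (x i) * (M i j * x j)).re := by
        simp only [dotProduct, mulVec, dotProduct, Finset.mul_sum, Complex.re_sum,
          Pi.star_apply, RCLike.star_def]
      have e2 : (star y ⬝ᵥ compMatrix A *ᵥ y).re
          = ∑ i, ∑ j, ((y i) * (compMatrix A i j * y j)).re := by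
        rw [hy]
        simp only [dotProduct, mulVec, dotProduct, Finset.mul_sum, Complex.re_sum]
      rw [e1, e2]
      refine Finset.sum_le_sum fun i _ => Finset.sum_le_sum fun j _ => ?_
      by_cases hij : i = j
      · subst hij
        have : M i i = (‖A i i‖ : ℂ) := by
          rw [hMdef, Matrix.hadamard_apply, hdω i, one_mul]; exact hdiag' i
        rw [this]
        simp only [compMatrix, eq_self_iff_true, if_true, hydef]
        have : (starRingEnd ℂ) (x i) * ((‖A i i‖ : ℂ) * x i)
            = ((‖A i i‖ * ‖x i‖ ^ 2 : ℝ) : ℂ) := by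
          rw [mul_comm ((starRingEnd ℂ) (x i)), mul_assoc, mul_comm (x i), Complex.conj_mul']
          push_cast
          ring
        rw [this]
        have : ((‖x i‖ : ℂ)) * ((‖A i i‖ : ℂ) * (‖x i‖ : ℂ))
            = ((‖x i‖ * (‖A i i‖ * ‖x i‖) : ℝ) : ℂ) := by push_cast; ring
        rw [this]
        simp only [Complex.ofReal_re]
        exact le_of_eq (by ring)
      · have hcomp : compMatrix A i j = -(‖A i j‖ : ℂ) := by simp [compMatrix, hij]
        have e3 : ((y i) * (compMatrix A i j * y j)).re
            = -(‖x i‖ * ‖A i j‖ * ‖x j‖) := by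
          rw [hcomp]
          simp only [hydef]
          have : ((‖x i‖:ℂ)) * (-(‖A i j‖:ℂ) * (‖x j‖:ℂ))
              = ((-(‖x i‖ * ‖A i j‖ * ‖x j‖) : ℝ) : ℂ) := by push_cast; ring
          rw [this, Complex.ofReal_re]
        rw [e3]
        have hb : ‖(starRingEnd ℂ) (x i) * (M i j * x j)‖ ≤ ‖x i‖ * ‖A i j‖ * ‖x j‖ := by
          rw [norm_mul, norm_mul, RCLike.norm_conj]
          have : ‖M i j‖ = ‖A i j‖ := by
            simp [hMdef, Matrix.hadamard_apply, norm_mul, hunit i j]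
          rw [this]; exact le_of_eq (by ring)
        have := neg_abs_le ((starRingEnd ℂ) (x i) * (M i j * x j)).re
        have habs := Complex.abs_re_le_norm ((starRingEnd ℂ) (x i) * (M i j * x j))
        have : -(‖x i‖ * ‖A i j‖ * ‖x j‖) ≤ -|((starRingEnd ℂ) (x i) * (M i j * x j)).re| := by
          apply neg_le_neg
          exact le_trans habs hb
        linarith [neg_abs_le ((starRingEnd ℂ) (x i) * (M i j * x j)).re]
    rw [Complex.le_def]
    refine ⟨by simpa using le_trans h0re hle, ?_⟩
    have := hreal
    rw [Complex.conj_eq_iff_im] at this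
    simp [this]
end
end

section
/- If a density matrix ρ on C^d satisfies ρ ≥ ((d−k)/(d−1)) Δ(ρ), where Δ is the fully dephasing map, then ρ ∈ C_k (ρ has coherence number at most k). -/
open Matrix BigOperators ComplexOrder

noncomputable section

/-- coherence rank of a vector: number of nonzero coefficients in the fixed basis -/
def cohRank {d : ℕ} (v : Fin d → ℂ) : ℕ :=
  (Finset.univ.filter (fun i => v i ≠ 0)).card

/-- projector onto the pure state with coefficient vector `v` -/
def pureProj {d : ℕ} (v : Fin d → ℂ) : Matrix (Fin d) (Fin d) ℂ :=
  Matrix.vecMulVec v (star v)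

/-- the set `C_k`: convex hull of pure-state projectors with coherence rank ≤ k -/
def Ck (d k : ℕ) : Set (Matrix (Fin d) (Fin d) ℂ) :=
  convexHull ℝ
    {M | ∃ v : Fin d → ℂ, (∑ i, ‖v i‖ ^ 2 = 1) ∧ cohRank v ≤ k ∧ M = pureProj v}

/-- density matrix predicate -/
def IsDensity {d : ℕ} (ρ : Matrix (Fin d) (Fin d) ℂ) : Prop :=
  ρ.PosSemidef ∧ ρ.trace = 1

/-- robustness of (k+1)-level coherence -/
def RMC {d : ℕ} (k : ℕ) (ρ : Matrix (Fin d) (Fin d) ℂ) : ℝ :=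
  sInf {s : ℝ | 0 ≤ s ∧ ∃ τ : Matrix (Fin d) (Fin d) ℂ, IsDensity τ ∧
    ((1 + s)⁻¹ : ℝ) • (ρ + (s : ℝ) • τ) ∈ Ck d k}

/-- fully dephasing map in the fixed basis -/
def deph {d : ℕ} (ρ : Matrix (Fin d) (Fin d) ℂ) : Matrix (Fin d) (Fin d) ℂ :=
  Matrix.diagonal (fun i => ρ i i)

section Aux

variable {d : ℕ}

/-- smul of PSD by a nonneg real is PSD -/
lemma psd_real_smul {A : Matrix (Fin d) (Fin d) ℂ} (hA : A.PosSemidef) {r : ℝ}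
    (hr : 0 ≤ r) : (r • A).PosSemidef := by
  rw [Matrix.posSemidef_iff_dotProduct_mulVec] at hA ⊢
  constructor
  · ext i j
    simp only [Matrix.conjTranspose_apply, Matrix.smul_apply, star_smul, star_trivial]
    rw [← Matrix.conjTranspose_apply, hA.1.eq]
  · intro x
    have h0 := hA.2 x
    rw [Matrix.smul_mulVec, dotProduct_smul]
    rw [Complex.real_smul]
    exact mul_nonneg (by exact_mod_cast hr) h0

/-- PSD with zero diagonal is zero -/
lemma psd_diag_zero {A : Matrix (Fin d) (Fin d) ℂ} (hA : A.PosSemidef)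
    (h : ∀ i, A i i = 0) : A = 0 := by
  obtain ⟨B, rfl⟩ : ∃ B : Matrix (Fin d) (Fin d) ℂ, A = Bᴴ * B := by
    open scoped MatrixOrder in
    exact CStarAlgebra.nonneg_iff_eq_star_mul_self.mp hA.nonneg
  have hB : ∀ l i, B l i = 0 := by
    intro l i
    have h1 := h i
    rw [Matrix.mul_apply] at h1
    simp only [Matrix.conjTranspose_apply, RCLike.star_def, RCLike.conj_mul] at h1
    have h2 : ∑ x, (‖B x i‖ ^ 2 : ℝ) = 0 := by
      norm_cast at h1; exact RCLike.ofReal_eq_zero.mp (by exact_mod_cast h1)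
    have h3 := (Finset.sum_eq_zero_iff_of_nonneg (fun x _ => by positivity)).mp h2 l
      (Finset.mem_univ l)
    simpa using h3
  ext i j
  rw [Matrix.mul_apply]
  simp [hB]

lemma unitary_diag_sum (U : Matrix (Fin d) (Fin d) ℂ) (f : Fin d → ℝ) :
    U * Matrix.diagonal (fun i => (f i : ℂ)) * star U
      = ∑ i, f i • pureProj (fun j => U j i) := by
  ext j l
  rw [Matrix.sum_apply, Matrix.mul_apply]
  simp only [Matrix.mul_diagonal, Matrix.smul_apply, pureProj, Matrix.vecMulVec_apply,
    Pi.star_apply, Matrix.star_apply, Matrix.star_eq_conjTranspose, Matrix.conjTranspose_apply]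
  refine Finset.sum_congr rfl fun i _ => ?_
  rw [Complex.real_smul]
  ring

lemma trace_pureProj (v : Fin d → ℂ) : (pureProj v).trace = ((∑ j, ‖v j‖ ^ 2 : ℝ) : ℂ) := by
  simp only [Matrix.trace, Matrix.diag_apply, pureProj, Matrix.vecMulVec_apply, Pi.star_apply,
    RCLike.star_def, RCLike.mul_conj]
  push_cast
  rfl

/-- spectral decomposition of a PSD matrix into pure projectors -/
lemma psd_decomp {A : Matrix (Fin d) (Fin d) ℂ} (hA : A.PosSemidef) :
    ∃ (lam : Fin d → ℝ) (u : Fin d → Fin d → ℂ),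
      (∀ i, 0 ≤ lam i) ∧
      (∀ i, ∑ j, ‖u i j‖ ^ 2 = 1) ∧
      (∀ i, A *ᵥ u i = ((lam i : ℂ) • u i)) ∧
      (A = ∑ i, lam i • pureProj (u i)) ∧
      (((∑ i, lam i : ℝ) : ℂ) = A.trace) := by
  have hH : A.IsHermitian := hA.1
  set U : Matrix (Fin d) (Fin d) ℂ := (hH.eigenvectorUnitary : Matrix (Fin d) (Fin d) ℂ) with hU
  set D : Matrix (Fin d) (Fin d) ℂ :=
    Matrix.diagonal (fun i => ((hH.eigenvalues i : ℝ) : ℂ)) with hD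
  have hUU : star U * U = 1 := Matrix.mem_unitaryGroup_iff'.mp (hH.eigenvectorUnitary).2
  have hspec : A = U * D * star U := by
    have h := hH.spectral_theorem
    rw [Unitary.conjStarAlgAut_apply] at h
    exact h
  have hnorm : ∀ i, ∑ j, ‖U j i‖ ^ 2 = 1 := by
    intro i
    have h1 : (star U * U) i i = 1 := by rw [hUU]; simp
    rw [Matrix.mul_apply] at h1
    simp only [Matrix.star_apply, Matrix.star_eq_conjTranspose, Matrix.conjTranspose_apply,
      RCLike.star_def, RCLike.conj_mul] at h1
    norm_cast at h1
    exact Complex.ofReal_eq_one.mp h1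
  have key : U * D * star U = ∑ i, hH.eigenvalues i • pureProj (fun j => U j i) :=
    unitary_diag_sum U hH.eigenvalues
  refine ⟨hH.eigenvalues, fun i j => U j i, hA.eigenvalues_nonneg, hnorm, ?_, hspec.trans key, ?_⟩
  · intro i
    have hAU : A * U = U * D := by
      calc A * U = (U * D * star U) * U := by rw [← hspec]
        _ = U * D := by rw [Matrix.mul_assoc (U * D), hUU, Matrix.mul_one]
    funext j
    have h2 : (A * U) j i = (U * D) j i := by rw [hAU]
    rw [Matrix.mul_apply, hD, Matrix.mul_diagonal] at h2
    simpa [Matrix.mulVec, dotProduct, Pi.smul_apply, Complex.real_smul, mul_comm] using h2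
  · calc ((∑ i, hH.eigenvalues i : ℝ) : ℂ)
        = (U * D * star U).trace := by
          rw [key, Matrix.trace_sum]
          push_cast
          refine Finset.sum_congr rfl fun i _ => ?_
          rw [Matrix.trace_smul, trace_pureProj, hnorm i]
          simp [Complex.real_smul]
      _ = A.trace := by rw [← hspec]

lemma card_filter_one {α : Type*} [DecidableEq α] (s : Finset α) (a : α)
    (ha : a ∈ s) (n : ℕ) :
    ((s.powersetCard (n+1)).filter (fun S => a ∈ S)).card = (s.card - 1).choose n := by
  have h : ((s.powersetCard (n+1)).filter (fun S => a ∈ S)).card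
      = ((s.erase a).powersetCard n).card := by
    refine Finset.card_bij' (fun S _ => S.erase a) (fun T _ => insert a T) ?_ ?_ ?_ ?_
    · intro S hS
      simp only [Finset.mem_filter, Finset.mem_powersetCard] at hS
      obtain ⟨⟨hsub, hcard⟩, haS⟩ := hS
      rw [Finset.mem_powersetCard]
      exact ⟨Finset.erase_subset_erase a hsub,
        by rw [Finset.card_erase_of_mem haS, hcard]; omega⟩
    · intro T hT
      rw [Finset.mem_powersetCard] at hT
      obtain ⟨hsub, hcard⟩ := hT
      have haT : a ∉ T := fun h => (Finset.notMem_erase a s) (hsub h)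
      simp only [Finset.mem_filter, Finset.mem_powersetCard]
      refine ⟨⟨?_, ?_⟩, Finset.mem_insert_self a T⟩
      · intro x hx
        rcases Finset.mem_insert.mp hx with rfl | hx
        · exact ha
        · exact (Finset.erase_subset a s) (hsub hx)
      · rw [Finset.card_insert_of_notMem haT, hcard]
    · intro S hS
      simp only [Finset.mem_filter] at hS
      exact Finset.insert_erase hS.2
    · intro T hT
      rw [Finset.mem_powersetCard] at hT
      have haT : a ∉ T := fun h => (Finset.notMem_erase a s) (hT.1 h)
      exact Finset.erase_insert haT
  rw [h, Finset.card_powersetCard, Finset.card_erase_of_mem ha]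

lemma card_filter_two {α : Type*} [DecidableEq α] (s : Finset α) {a b : α}
    (ha : a ∈ s) (hb : b ∈ s) (hab : a ≠ b) (n : ℕ) :
    ((s.powersetCard (n+2)).filter (fun S => a ∈ S ∧ b ∈ S)).card
      = (s.card - 2).choose n := by
  have h : ((s.powersetCard (n+2)).filter (fun S => a ∈ S ∧ b ∈ S)).card
      = (((s.erase a).erase b).powersetCard n).card := by
    refine Finset.card_bij' (fun S _ => (S.erase a).erase b)
      (fun T _ => insert a (insert b T)) ?_ ?_ ?_ ?_
    · intro S hS
      simp only [Finset.mem_filter, Finset.mem_powersetCard] at hS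
      obtain ⟨⟨hsub, hcard⟩, haS, hbS⟩ := hS
      rw [Finset.mem_powersetCard]
      refine ⟨Finset.erase_subset_erase b (Finset.erase_subset_erase a hsub), ?_⟩
      rw [Finset.card_erase_of_mem (Finset.mem_erase.mpr ⟨hab.symm, hbS⟩),
        Finset.card_erase_of_mem haS, hcard]
      omega
    · intro T hT
      rw [Finset.mem_powersetCard] at hT
      obtain ⟨hsub, hcard⟩ := hT
      have hbT : b ∉ T := fun h => (Finset.notMem_erase b _) (hsub h)
      have haT : a ∉ T := fun h => (Finset.notMem_erase a s) (Finset.erase_subset b _ (hsub h))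
      have haInsert : a ∉ insert b T := by
        simp only [Finset.mem_insert]
        rintro (rfl | h) <;> [exact hab rfl; exact haT h]
      simp only [Finset.mem_filter, Finset.mem_powersetCard]
      refine ⟨⟨?_, ?_⟩, Finset.mem_insert_self a _,
        Finset.mem_insert_of_mem (Finset.mem_insert_self b T)⟩
      · intro x hx
        rcases Finset.mem_insert.mp hx with rfl | hx
        · exact ha
        rcases Finset.mem_insert.mp hx with rfl | hx
        · exact hb
        · exact (Finset.erase_subset a s) ((Finset.erase_subset b _) (hsub hx))
      · rw [Finset.card_insert_of_notMem haInsert, Finset.card_insert_of_notMem hbT, hcard]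
    · intro S hS
      simp only [Finset.mem_filter] at hS
      obtain ⟨_, haS, hbS⟩ := hS
      rw [Finset.insert_erase (Finset.mem_erase.mpr ⟨hab.symm, hbS⟩), Finset.insert_erase haS]
    · intro T hT
      rw [Finset.mem_powersetCard] at hT
      have hbT : b ∉ T := fun h => (Finset.notMem_erase b _) (hT.1 h)
      have haT : a ∉ T := fun h => (Finset.notMem_erase a s) (Finset.erase_subset b _ (hT.1 h))
      have haInsert : a ∉ insert b T := by
        simp only [Finset.mem_insert]
        rintro (rfl | h) <;> [exact hab rfl; exact haT h]
      rw [Finset.erase_insert haInsert, Finset.erase_insert hbT]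
  rw [h, Finset.card_powersetCard, Finset.card_erase_of_mem
    (Finset.mem_erase.mpr ⟨hab.symm, hb⟩), Finset.card_erase_of_mem ha, Nat.sub_sub]

/-- core lemma: a trace-one sum of PSD matrices, each supported on at most `k` lines,
is in `C_k`. -/
lemma mem_Ck_of_decomp {ι : Type*} [DecidableEq ι] (k : ℕ) (T : Finset ι)
    (A : ι → Matrix (Fin d) (Fin d) ℂ) (S : ι → Finset (Fin d))
    (hPSD : ∀ t, (A t).PosSemidef)
    (hsupp : ∀ t, ∀ j, j ∉ S t → ∀ l, A t j l = 0)
    (hcard : ∀ t ∈ T, (S t).card ≤ k)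
    (ρ : Matrix (Fin d) (Fin d) ℂ) (hsum : ∑ t ∈ T, A t = ρ) (htr : ρ.trace = 1) :
    ρ ∈ Ck d k := by
  classical
  choose lam u hnn hnorm heig hdec htrA using fun t => psd_decomp (hPSD t)
  set w : ι × Fin d → ℝ := fun p => lam p.1 p.2 with hw
  set z : ι × Fin d → Matrix (Fin d) (Fin d) ℂ := fun p => pureProj (u p.1 p.2) with hz
  set t' : Finset (ι × Fin d) :=
    (T ×ˢ (Finset.univ : Finset (Fin d))).filter (fun p => w p ≠ 0) with ht'
  have hsum' : ∑ p ∈ t', w p • z p = ρ := by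
    rw [Finset.sum_filter_of_ne (fun p _ h => by
      by_contra h0
      exact h (by rw [h0, zero_smul]))]
    rw [Finset.sum_product]
    rw [← hsum]
    exact Finset.sum_congr rfl fun t _ => (hdec t).symm
  have hw1 : ∑ p ∈ t', w p = 1 := by
    have h2 : ∑ p ∈ t', w p = ∑ t ∈ T, ∑ i, lam t i := by
      rw [Finset.sum_filter_ne_zero, Finset.sum_product]
    have h3 : ((∑ p ∈ t', w p : ℝ) : ℂ) = 1 := by
      rw [h2]
      push_cast
      rw [← htr, ← hsum, Matrix.trace_sum]
      exact Finset.sum_congr rfl fun t _ => by rw [← htrA t]; push_cast; ring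
    exact_mod_cast h3
  have hmem : ∀ p ∈ t', z p ∈
      {M | ∃ v : Fin d → ℂ, (∑ i, ‖v i‖ ^ 2 = 1) ∧ cohRank v ≤ k ∧ M = pureProj v} := by
    rintro ⟨t, i⟩ hp
    simp only [ht', Finset.mem_filter, Finset.mem_product] at hp
    obtain ⟨⟨htT, -⟩, hlam⟩ := hp
    refine ⟨u t i, hnorm t i, ?_, rfl⟩
    have hsub : (Finset.univ.filter (fun j => u t i j ≠ 0)) ⊆ S t := by
      intro j hj
      simp only [Finset.mem_filter] at hj
      by_contra hjS
      have h4 := congrFun (heig t i) j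
      have h5 : (A t *ᵥ u t i) j = 0 := by
        simp only [Matrix.mulVec, dotProduct]
        exact Finset.sum_eq_zero fun l _ => by rw [hsupp t j hjS l, zero_mul]
      rw [h5] at h4
      have h6 : (lam t i : ℂ) ≠ 0 := by
        simpa using hlam
      exact hj.2 (by
        have := h4.symm
        simp only [Pi.smul_apply, smul_eq_mul] at this
        rcases mul_eq_zero.mp this with h | h
        · exact absurd h h6
        · exact h)
    calc cohRank (u t i) ≤ (S t).card := Finset.card_le_card hsub
      _ ≤ k := hcard t htT
  have hρ : ρ = t'.centerMass w z := by
    rw [Finset.centerMass, hw1, hsum']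
    simp
  rw [Ck, hρ]
  exact Finset.centerMass_mem_convexHull t'
    (fun p hp => hnn p.1 p.2) (by rw [hw1]; exact one_pos) hmem

end Aux

/-- If `ρ ≥ ((d-k)/(d-1)) Δ(ρ)` then `ρ ∈ C_k`. -/
theorem stmt_8 {d k : ℕ} (hk : 1 ≤ k) (hkd : k ≤ d)
    (ρ : Matrix (Fin d) (Fin d) ℂ) (hρ : IsDensity ρ)
    (hcond : (ρ - ((((d : ℝ) - k) / ((d : ℝ) - 1)) • deph ρ)).PosSemidef) :
    ρ ∈ Ck d k := by
  classical
  obtain ⟨hpsd, htr⟩ := hρ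
  have hd1 : 1 ≤ d := hk.trans hkd
  -- diagonal entries nonneg
  have hdiag : ∀ i, 0 ≤ ρ i i := by
    intro i
    have h0 := (Matrix.posSemidef_iff_dotProduct_mulVec.mp hpsd).2 (Pi.single i 1)
    simpa [Matrix.mulVec_single, dotProduct, Pi.single_apply] using h0
  have hdephPSD : (deph ρ).PosSemidef := by
    rw [deph]
    exact Matrix.posSemidef_diagonal_iff.mpr hdiag
  -- if k = 1 then ρ is diagonal
  have hdeph1 : k = 1 → ρ = deph ρ := by
    intro hk1
    by_cases hd : d = 1
    · subst hd
      ext i j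
      have hij : i = j := Subsingleton.elim i j
      subst hij
      rw [deph, Matrix.diagonal_apply_eq]
    · have hd2 : 2 ≤ d := by omega
      have hco : ((d:ℝ) - (k:ℝ)) / ((d:ℝ) - 1) = 1 := by
        rw [hk1]
        push_cast
        apply div_self
        intro h
        have hd1' : (d:ℝ) = 1 := by linarith
        exact hd (by exact_mod_cast hd1')
      rw [hco, one_smul] at hcond
      have h0 := psd_diag_zero hcond (fun i => by
        simp [deph, Matrix.sub_apply, Matrix.diagonal_apply_eq])
      exact sub_eq_zero.mp h0
  set a : ℕ := (d-1).choose (k-1) with ha_def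
  set b : ℕ := if k = 1 then 1 else (d-2).choose (k-2) with hb_def
  have ha_pos : 0 < a := Nat.choose_pos (by omega)
  have hb_pos : 0 < b := by
    rw [hb_def]
    split
    · exact one_pos
    · exact Nat.choose_pos (by omega)
  set M : Matrix (Fin d) (Fin d) ℂ :=
    ((a:ℝ))⁻¹ • deph ρ + ((b:ℝ))⁻¹ • (ρ - deph ρ) with hM_def
  have hMpsd : M.PosSemidef := by
    by_cases hk1 : k = 1
    · have h0 : ρ - deph ρ = 0 := sub_eq_zero.mpr (hdeph1 hk1)
      rw [hM_def, h0, smul_zero, add_zero]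
      exact psd_real_smul hdephPSD (inv_nonneg.mpr (Nat.cast_nonneg a))
    · have hk2 : 2 ≤ k := by omega
      have hd2 : 2 ≤ d := by omega
      have hb_eq : b = (d-2).choose (k-2) := by rw [hb_def, if_neg hk1]
      have hnat : (d-1) * b = a * (k-1) := by
        have h := Nat.add_one_mul_choose_eq (d-2) (k-2)
        rw [show d - 2 + 1 = d - 1 by omega, show k - 2 + 1 = k - 1 by omega] at h
        rw [hb_eq, ha_def, h]
      have hcast : ((d:ℝ) - 1) * (b:ℝ) = (a:ℝ) * ((k:ℝ) - 1) := by
        have h := congrArg (Nat.cast : ℕ → ℝ) hnat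
        push_cast [Nat.cast_sub (show 1 ≤ d by omega), Nat.cast_sub (show 1 ≤ k by omega)] at h
        linarith
      have ha0 : (a:ℝ) ≠ 0 := by positivity
      have hb0 : (b:ℝ) ≠ 0 := by positivity
      have hd0 : (d:ℝ) - 1 ≠ 0 := by
        intro h
        have : (d:ℝ) = 1 := by linarith
        have : d = 1 := by exact_mod_cast this
        omega
      have hscal : ((a:ℝ))⁻¹ = ((b:ℝ))⁻¹ - ((b:ℝ))⁻¹ * (((d:ℝ) - (k:ℝ))/((d:ℝ) - 1)) := by
        field_simp
        linarith [hcast]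
      have hMX : M = ((b:ℝ))⁻¹ • (ρ - (((d:ℝ) - (k:ℝ))/((d:ℝ) - 1)) • deph ρ) := by
        rw [hM_def, hscal]
        module
      rw [hMX]
      exact psd_real_smul hcond (inv_nonneg.mpr (Nat.cast_nonneg b))
  set P : Finset (Fin d) → Matrix (Fin d) (Fin d) ℂ :=
    fun S => Matrix.diagonal (fun i => if i ∈ S then (1:ℂ) else 0) with hP_def
  have hPH : ∀ S, (P S)ᴴ = P S := by
    intro S
    have hstar : (star fun i => if i ∈ S then (1:ℂ) else 0)
        = (fun i => if i ∈ S then (1:ℂ) else 0) := by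
      funext i
      by_cases h : i ∈ S <;> simp [h]
    rw [hP_def, Matrix.diagonal_conjTranspose, hstar]
  set A : Finset (Fin d) → Matrix (Fin d) (Fin d) ℂ := fun S => P S * M * P S with hA_def
  have hentry : ∀ S i j, A S i j = (if i ∈ S then (1:ℂ) else 0) * M i j *
      (if j ∈ S then (1:ℂ) else 0) := by
    intro S i j
    rw [hA_def, hP_def]
    dsimp only
    rw [Matrix.mul_diagonal, Matrix.diagonal_mul]
  have hApsd : ∀ S, (A S).PosSemidef := by
    intro S
    have h := hMpsd.mul_mul_conjTranspose_same (P S)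
    rwa [hPH] at h
  have hAsupp : ∀ S, ∀ j, j ∉ S → ∀ l, A S j l = 0 := by
    intro S j hj l
    rw [hentry, if_neg hj, zero_mul, zero_mul]
  have hasum : ∑ S ∈ Finset.powersetCard k (Finset.univ : Finset (Fin d)), A S = ρ := by
    ext i j
    rw [Matrix.sum_apply]
    have h1 : ∀ S ∈ Finset.powersetCard k (Finset.univ : Finset (Fin d)),
        A S i j = if i ∈ S ∧ j ∈ S then M i j else 0 := by
      intro S _
      rw [hentry]
      by_cases hi : i ∈ S <;> by_cases hjS : j ∈ S <;> simp [hi, hjS]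
    rw [Finset.sum_congr rfl h1, ← Finset.sum_filter, Finset.sum_const, nsmul_eq_mul]
    by_cases hij : i = j
    · subst hij
      have hMii : M i i = ((a:ℝ))⁻¹ • ρ i i := by
        rw [hM_def]
        simp [deph, Matrix.add_apply, Matrix.smul_apply, Matrix.sub_apply,
          Matrix.diagonal_apply_eq]
      have hcard1 : ((Finset.powersetCard k (Finset.univ : Finset (Fin d))).filter
          (fun S => i ∈ S ∧ i ∈ S)).card = a := by
        rw [show Finset.filter (fun S => i ∈ S ∧ i ∈ S)
            (Finset.powersetCard k (Finset.univ : Finset (Fin d)))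
            = Finset.filter (fun S => i ∈ S) (Finset.powersetCard k Finset.univ) from
          Finset.filter_congr (fun S _ => by simp), show k = (k-1)+1 by omega,
          card_filter_one Finset.univ i (Finset.mem_univ i) (k-1)]
        rw [Finset.card_univ, Fintype.card_fin]
      rw [hcard1, hMii, Complex.real_smul]
      rw [← mul_assoc]
      norm_cast
      rw [mul_inv_cancel₀ (show ((a:ℕ):ℝ) ≠ 0 by positivity)]
      simp
    · have hΔ : deph ρ i j = 0 := Matrix.diagonal_apply_ne _ hij
      have hMij : M i j = ((b:ℝ))⁻¹ • ρ i j := by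
        rw [hM_def]
        simp [Matrix.add_apply, Matrix.smul_apply, Matrix.sub_apply, hΔ]
      by_cases hk1 : k = 1
      · have hρij : ρ i j = 0 := by
          rw [hdeph1 hk1]; exact hΔ
        rw [hρij] at hMij ⊢
        rw [hMij, smul_zero, mul_zero]
      · have hcard2 : ((Finset.powersetCard k (Finset.univ : Finset (Fin d))).filter
            (fun S => i ∈ S ∧ j ∈ S)).card = b := by
          rw [show k = (k-2)+2 by omega,
            card_filter_two Finset.univ (Finset.mem_univ i) (Finset.mem_univ j) hij (k-2)]
          rw [Finset.card_univ, Fintype.card_fin, hb_def, if_neg hk1]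
        rw [hcard2, hMij, Complex.real_smul]
        rw [← mul_assoc]
        norm_cast
        rw [mul_inv_cancel₀ (show ((b:ℕ):ℝ) ≠ 0 by positivity)]
        simp
  refine mem_Ck_of_decomp k (Finset.powersetCard k (Finset.univ : Finset (Fin d))) A id
    hApsd hAsupp (fun S hS => ?_) ρ hasum htr
  rw [Finset.mem_powersetCard] at hS
  simp [hS.2]
end
end

section
/- The k-dephasing map Δ_k(ρ) = (1/C(d−1,k−1)) Σ_{I ⊆ {1,…,d}, |I|=k} P_I ρ P_I satisfies Δ_k(ρ) = ((k−1)/(d−1)) ρ + ((d−k)/(d−1)) Δ_1(ρ), where P_I = Σ_{i∈I} |i⟩⟨i| and Δ_1 is the fully dephasing map. -/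
open Matrix BigOperators ComplexOrder

noncomputable section

/-- projector onto the span of basis vectors indexed by `I` -/
def projP {d : ℕ} (I : Finset (Fin d)) : Matrix (Fin d) (Fin d) ℂ :=
  Matrix.diagonal (fun i => if i ∈ I then 1 else 0)

/-- the k-dephasing map -/
def kDeph {d : ℕ} (k : ℕ) (ρ : Matrix (Fin d) (Fin d) ℂ) : Matrix (Fin d) (Fin d) ℂ :=
  ((Nat.choose (d - 1) (k - 1) : ℂ))⁻¹ •
    ∑ I ∈ Finset.powersetCard k (Finset.univ : Finset (Fin d)), projP I * ρ * projP I

/-- number of `k`-subsets of a finite type containing a fixed subset `s`. -/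
lemma aux1 {α : Type*} [DecidableEq α] [Fintype α] (s : Finset α) (k : ℕ) (hs : s.card ≤ k) :
    ((Finset.powersetCard k (Finset.univ : Finset α)).filter (fun I => s ⊆ I)).card
      = Nat.choose (Fintype.card α - s.card) (k - s.card) := by
  rw [← Finset.card_compl s, ← Finset.card_powersetCard (k - s.card) sᶜ]
  apply Finset.card_nbij' (fun I => I \ s) (fun J => J ∪ s)
  · intro I hI
    simp only [Finset.mem_coe, Finset.mem_filter, Finset.mem_powersetCard] at hI
    obtain ⟨⟨_, hcard⟩, hsub⟩ := hI
    simp only [Finset.mem_coe, Finset.mem_powersetCard]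
    refine ⟨fun x hx => ?_, ?_⟩
    · simp only [Finset.mem_sdiff] at hx
      simp [hx.2]
    · rw [Finset.card_sdiff_of_subset hsub, hcard]
  · intro J hJ
    simp only [Finset.mem_coe, Finset.mem_powersetCard] at hJ
    obtain ⟨hsub, hcard⟩ := hJ
    have hdisj : Disjoint J s := by
      rw [Finset.disjoint_left]
      intro x hx
      have := hsub hx
      simpa using this
    simp only [Finset.mem_coe, Finset.mem_filter, Finset.mem_powersetCard]
    refine ⟨⟨Finset.subset_univ _, ?_⟩, Finset.subset_union_right⟩
    rw [Finset.card_union_of_disjoint hdisj, hcard]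
    omega
  · intro I hI
    simp only [Finset.mem_coe, Finset.mem_filter, Finset.mem_powersetCard] at hI
    exact Finset.sdiff_union_of_subset hI.2
  · intro J hJ
    simp only [Finset.mem_coe, Finset.mem_powersetCard] at hJ
    have hdisj : Disjoint J s := by
      rw [Finset.disjoint_left]
      intro x hx
      have := hJ.1 hx
      simpa using this
    exact Finset.union_sdiff_cancel_right hdisj

lemma count_single {d k : ℕ} (hk : 1 ≤ k) (i : Fin d) :
    ((Finset.powersetCard k (Finset.univ : Finset (Fin d))).filter (fun I => i ∈ I)).card
      = Nat.choose (d - 1) (k - 1) := by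
  have := aux1 ({i} : Finset (Fin d)) k (by simpa using hk)
  simpa [Finset.singleton_subset_iff] using this

lemma count_pair {d k : ℕ} (hd : 2 ≤ d) (hk : 1 ≤ k) (hkd : k ≤ d) {i j : Fin d} (hij : i ≠ j) :
    (d - 1) * ((Finset.powersetCard k (Finset.univ : Finset (Fin d))).filter
        (fun I => i ∈ I ∧ j ∈ I)).card
      = (k - 1) * Nat.choose (d - 1) (k - 1) := by
  rcases eq_or_lt_of_le hk with h1 | h2
  · -- k = 1
    have : ((Finset.powersetCard k (Finset.univ : Finset (Fin d))).filter
        (fun I => i ∈ I ∧ j ∈ I)) = ∅ := by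
      rw [Finset.filter_eq_empty_iff]
      intro I hI
      simp only [Finset.mem_powersetCard] at hI
      rintro ⟨hi, hj⟩
      rw [← h1] at hI
      obtain ⟨x, hx⟩ := Finset.card_eq_one.mp hI.2
      rw [hx] at hi hj
      simp_all
    rw [this]
    simp [← h1]
  · -- k ≥ 2
    have hcard : ({i, j} : Finset (Fin d)).card = 2 := by
      rw [Finset.card_insert_of_notMem (by simpa using hij), Finset.card_singleton]
    have hc := aux1 ({i, j} : Finset (Fin d)) k (by omega)
    have heq : ∀ I : Finset (Fin d), (({i, j} : Finset (Fin d)) ⊆ I) = (i ∈ I ∧ j ∈ I) := by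
      intro I; simp [Finset.insert_subset_iff]
    simp only [heq, hcard, Fintype.card_fin] at hc
    rw [hc]
    have key := Nat.add_one_mul_choose_eq (d - 2) (k - 2)
    have h1 : d - 2 + 1 = d - 1 := by omega
    have h2 : k - 2 + 1 = k - 1 := by omega
    rw [h1, h2] at key
    rw [key]; ring

/-- `Δ_k(ρ) = ((k-1)/(d-1)) ρ + ((d-k)/(d-1)) Δ_1(ρ)`. -/
theorem stmt_9 {d k : ℕ} (hd : 2 ≤ d) (hk : 1 ≤ k) (hkd : k ≤ d)
    (ρ : Matrix (Fin d) (Fin d) ℂ) :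
    kDeph k ρ = ((((k : ℂ) - 1) / ((d : ℂ) - 1)) • ρ) +
      ((((d : ℂ) - (k : ℂ)) / ((d : ℂ) - 1)) • deph ρ) := by
  have hn : (Nat.choose (d - 1) (k - 1) : ℂ) ≠ 0 := by
    exact_mod_cast Nat.cast_ne_zero.mpr (Nat.choose_pos (by omega)).ne'
  have hd1 : ((d : ℂ) - 1) ≠ 0 :=
    sub_ne_zero.mpr (by exact_mod_cast (by omega : d ≠ 1))
  classical
  ext i j
  simp only [kDeph, projP, Matrix.smul_apply, Matrix.add_apply, Matrix.sum_apply,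
    Matrix.mul_diagonal, Matrix.diagonal_mul, smul_eq_mul]
  have hsum : ∑ I ∈ Finset.powersetCard k (Finset.univ : Finset (Fin d)),
      (if i ∈ I then (1:ℂ) else 0) * ρ i j * (if j ∈ I then (1:ℂ) else 0)
      = (((Finset.powersetCard k (Finset.univ : Finset (Fin d))).filter
          (fun I => i ∈ I ∧ j ∈ I)).card : ℂ) * ρ i j := by
    have hterm : ∀ I ∈ Finset.powersetCard k (Finset.univ : Finset (Fin d)),
        (if i ∈ I then (1:ℂ) else 0) * ρ i j * (if j ∈ I then (1:ℂ) else 0)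
        = if i ∈ I ∧ j ∈ I then ρ i j else 0 := by
      intro I _
      by_cases h1 : i ∈ I <;> by_cases h2 : j ∈ I <;> simp [h1, h2]
    rw [Finset.sum_congr rfl hterm, ← Finset.sum_filter, Finset.sum_const, nsmul_eq_mul]
  rw [hsum]
  by_cases hij : i = j
  · subst hij
    have : ((Finset.powersetCard k (Finset.univ : Finset (Fin d))).filter
        (fun I => i ∈ I ∧ i ∈ I)).card = Nat.choose (d - 1) (k - 1) := by
      rw [← count_single hk i]; congr 1; simp
    rw [this]
    simp only [deph, Matrix.diagonal_apply_eq]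
    field_simp
    ring
  · have hcast : ((d : ℂ) - 1) * (((Finset.powersetCard k (Finset.univ : Finset (Fin d))).filter
        (fun I => i ∈ I ∧ j ∈ I)).card : ℂ) = ((k : ℂ) - 1) * (Nat.choose (d - 1) (k - 1) : ℂ) := by
      have := count_pair hd hk hkd hij
      have h2 : (((d - 1) * ((Finset.powersetCard k (Finset.univ : Finset (Fin d))).filter
          (fun I => i ∈ I ∧ j ∈ I)).card : ℕ) : ℂ)
          = (((k - 1) * Nat.choose (d - 1) (k - 1) : ℕ) : ℂ) := congrArg _ this
      push_cast [Nat.cast_sub (by omega : 1 ≤ d), Nat.cast_sub hk] at h2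
      convert h2 using 2
    simp only [deph, Matrix.diagonal_apply_ne _ hij]
    field_simp
    linear_combination ρ i j * hcast
end
end

section
/- If W is Hermitian and P_I W P_I ≥ 0 for every k-element subset I of the fixed basis indices, then W has at most d−k negative eigenvalues (counting multiplicity). -/
open Matrix BigOperators ComplexOrder

noncomputable section

/-- the subspace of vectors supported on `S` -/
def coordSub {d : ℕ} (S : Finset (Fin d)) : Submodule ℂ (Fin d → ℂ) where
  carrier := {x | ∀ i ∉ S, x i = 0}
  add_mem' := by intro a b ha hb i hi; simp [ha i hi, hb i hi]
  zero_mem' := by intro i _; rfl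
  smul_mem' := by intro c x hx i hi; simp [hx i hi]

lemma mem_coordSub {d : ℕ} {S : Finset (Fin d)} {x : Fin d → ℂ} :
    x ∈ coordSub S ↔ ∀ i ∉ S, x i = 0 := Iff.rfl

/-- `coordSub S` is linearly equivalent to `S → ℂ`. -/
def coordEquiv {d : ℕ} (S : Finset (Fin d)) : coordSub S ≃ₗ[ℂ] (S → ℂ) where
  toFun x i := x.1 i
  map_add' x y := rfl
  map_smul' c x := rfl
  invFun c := ⟨fun i => if h : i ∈ S then c ⟨i, h⟩ else 0, by
    intro i hi; simp [hi]⟩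
  left_inv x := by
    ext i
    by_cases h : i ∈ S
    · simp [h]
    · simp [h, x.2 i h]
  right_inv c := by ext i; simp [i.2]

lemma finrank_coordSub {d : ℕ} (S : Finset (Fin d)) :
    Module.finrank ℂ (coordSub S) = S.card := by
  rw [(coordEquiv S).finrank_eq, Module.finrank_fintype_fun_eq_card,
    Fintype.card_coe]

/-- If `P_I W P_I ≥ 0` for every `k`-element subset `I`, then `W` has at most `d - k`
negative eigenvalues (counting multiplicity). -/
theorem stmt_12 {d k : ℕ} (hk : 1 ≤ k) (hkd : k ≤ d)
    (W : Matrix (Fin d) (Fin d) ℂ) (hW : W.IsHermitian)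
    (hwit : ∀ I : Finset (Fin d), I.card = k → (projP I * W * projP I).PosSemidef) :
    (Finset.univ.filter (fun i => hW.eigenvalues i < 0)).card ≤ d - k := by
  by_contra hcon
  push_neg at hcon
  set S : Finset (Fin d) := Finset.univ.filter (fun i => hW.eigenvalues i < 0) with hS
  -- pick a k-element subset I
  obtain ⟨I, -, hI⟩ := Finset.exists_subset_card_eq (s := (Finset.univ : Finset (Fin d))) (n := k)
    (by simpa using hkd)
  set U : Matrix (Fin d) (Fin d) ℂ := (hW.eigenvectorUnitary : Matrix (Fin d) (Fin d) ℂ)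
    with hU
  -- the linear equivalence given by multiplication by U
  have hUs : star U * U = 1 := by
    rw [hU]; exact Unitary.coe_star_mul_self hW.eigenvectorUnitary
  have hsU : U * star U = 1 := by
    rw [hU]; exact Unitary.coe_mul_star_self hW.eigenvectorUnitary
  let e : (Fin d → ℂ) ≃ₗ[ℂ] (Fin d → ℂ) :=
    LinearEquiv.ofLinear U.mulVecLin (star U).mulVecLin
      (by rw [← Matrix.mulVecLin_mul, hsU, Matrix.mulVecLin_one])
      (by rw [← Matrix.mulVecLin_mul, hUs, Matrix.mulVecLin_one])
  set N : Submodule ℂ (Fin d → ℂ) := (coordSub S).map (e : (Fin d → ℂ) →ₗ[ℂ] (Fin d → ℂ))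
    with hN
  set V : Submodule ℂ (Fin d → ℂ) := coordSub I with hV
  have hNrank : Module.finrank ℂ N = S.card := by
    rw [hN, LinearEquiv.finrank_map_eq, finrank_coordSub]
  have hVrank : Module.finrank ℂ V = k := by rw [hV, finrank_coordSub, hI]
  -- intersection is nontrivial
  have hsum := Submodule.finrank_sup_add_finrank_inf_eq N V
  have htop : Module.finrank ℂ (N ⊔ V : Submodule ℂ (Fin d → ℂ)) ≤ d := by
    have := Submodule.finrank_le (N ⊔ V : Submodule ℂ (Fin d → ℂ))
    simpa [Module.finrank_fintype_fun_eq_card] using this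
  have hpos : 0 < Module.finrank ℂ (N ⊓ V : Submodule ℂ (Fin d → ℂ)) := by
    omega
  have hne : (N ⊓ V : Submodule ℂ (Fin d → ℂ)) ≠ ⊥ := by
    intro h
    rw [h, finrank_bot] at hpos
    exact lt_irrefl 0 hpos
  obtain ⟨x, hx, hx0⟩ := Submodule.exists_mem_ne_zero_of_ne_bot hne
  obtain ⟨hxN, hxV⟩ := Submodule.mem_inf.mp hx
  obtain ⟨c, hcS, hcx⟩ := hxN
  have hcx' : U *ᵥ c = x := hcx
  -- c is nonzero
  have hc0 : c ≠ 0 := by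
    intro h
    apply hx0
    rw [← hcx', h, Matrix.mulVec_zero]
  obtain ⟨i0, hi0'⟩ := Function.ne_iff.mp hc0
  have hi0 : c i0 ≠ 0 := by simpa using hi0'
  have hi0S : i0 ∈ S := by
    by_contra h
    exact hi0 (hcS i0 h)
  -- the quadratic form value
  have hquad : star x ⬝ᵥ (W *ᵥ x) =
      star c ⬝ᵥ ((star U * W * U) *ᵥ c) := by
    simp only [← hcx', Matrix.star_mulVec, Matrix.mulVec_mulVec,
      dotProduct_mulVec, Matrix.vecMul_vecMul, Matrix.star_eq_conjTranspose,
      Matrix.mul_assoc]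
  rw [show star U * W * U = Matrix.diagonal (RCLike.ofReal ∘ hW.eigenvalues) by
    have h := hW.conjStarAlgAut_star_eigenvectorUnitary
    rw [Unitary.conjStarAlgAut_apply, Unitary.coe_star, star_star] at h
    exact h] at hquad
  have hdiag : star c ⬝ᵥ ((Matrix.diagonal (RCLike.ofReal ∘ hW.eigenvalues)) *ᵥ c) =
      ((∑ i ∈ S, hW.eigenvalues i * Complex.normSq (c i) : ℝ) : ℂ) := by
    rw [dotProduct, Complex.ofReal_sum]
    rw [← Finset.sum_subset (Finset.subset_univ S)]
    · apply Finset.sum_congr rfl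
      intro i _
      simp only [Matrix.mulVec_diagonal, Pi.star_apply, Function.comp_apply,
        RCLike.star_def]
      rw [Complex.ofReal_mul]
      calc (starRingEnd ℂ) (c i) * ((hW.eigenvalues i : ℂ) * c i)
          = (hW.eigenvalues i : ℂ) * (c i * (starRingEnd ℂ) (c i)) := by ring
        _ = (hW.eigenvalues i : ℂ) * (Complex.normSq (c i) : ℂ) := by
            rw [Complex.mul_conj]
    · intro i _ hi
      simp [hcS i hi]
  have hneg : (∑ i ∈ S, hW.eigenvalues i * Complex.normSq (c i) : ℝ) < 0 := by
    have h1 : ∀ i ∈ S, hW.eigenvalues i * Complex.normSq (c i) ≤ (0 : ℝ) := by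
      intro i hi
      have : hW.eigenvalues i < 0 := by
        simpa [hS] using hi
      exact mul_nonpos_of_nonpos_of_nonneg this.le (Complex.normSq_nonneg _)
    have h2 : hW.eigenvalues i0 * Complex.normSq (c i0) < 0 := by
      have hev : hW.eigenvalues i0 < 0 := by simpa [hS] using hi0S
      have hn : 0 < Complex.normSq (c i0) := by
        simpa [Complex.normSq_pos] using hi0
      exact mul_neg_of_neg_of_pos hev hn
    calc (∑ i ∈ S, hW.eigenvalues i * Complex.normSq (c i) : ℝ)
        < ∑ _i ∈ S, (0 : ℝ) :=
          Finset.sum_lt_sum h1 ⟨i0, hi0S, h2⟩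
      _ = 0 := by simp
  -- positivity from the hypothesis
  have hPx : projP I *ᵥ x = x := by
    funext j
    by_cases hj : j ∈ I
    · simp [projP, Matrix.mulVec_diagonal, hj]
    · simp [projP, Matrix.mulVec_diagonal, hj, hxV j hj]
  have hPH : (projP I)ᴴ = projP I := by
    apply Matrix.ext
    intro i j
    by_cases h : i = j
    · subst h; simp [projP, Matrix.diagonal, apply_ite]
    · simp [projP, Matrix.diagonal_apply_ne _ h, Matrix.diagonal_apply_ne _ (Ne.symm h),
        Matrix.conjTranspose_apply]
  have hpos' := (hwit I hI).dotProduct_mulVec_nonneg x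
  have hform : star x ⬝ᵥ ((projP I * W * projP I) *ᵥ x) = star x ⬝ᵥ (W *ᵥ x) := by
    rw [← Matrix.mulVec_mulVec, ← Matrix.mulVec_mulVec, hPx,
      dotProduct_mulVec (star x) (projP I), ← hPH, ← Matrix.star_mulVec,
      hPx]
  rw [hform, hquad, hdiag] at hpos'
  have : (0 : ℝ) ≤ (∑ i ∈ S, hW.eigenvalues i * Complex.normSq (c i) : ℝ) := by
    exact_mod_cast hpos'
  linarith
end
end

section
/- For any unit vector |ψ⟩ = Σ_i c_i|i⟩ in C^d and any pure state |φ⟩ with coherence rank at most k, |⟨φ|ψ⟩|² ≤ Σ_{i=1}^k |c_i↓|², where c_i↓ are the coefficients reordered by non-increasing modulus; moreover this bound is attained. -/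
open Matrix BigOperators ComplexOrder

noncomputable section

/-- the squared moduli of the coefficients of `c`, sorted in non-increasing order -/
def sortedAbsSq {d : ℕ} (c : Fin d → ℂ) : Fin d → ℝ :=
  fun i => ‖c (Tuple.sort (fun j => -‖c j‖ ^ 2) i)‖ ^ 2

/-- sum of the `k` largest squared moduli of the coefficients of `c` -/
def topk {d : ℕ} (c : Fin d → ℂ) (k : ℕ) : ℝ :=
  ∑ i ∈ Finset.univ.filter (fun i : Fin d => (i : ℕ) < k), sortedAbsSq c i


lemma nat_le_apply : ∀ (m : ℕ) {n : ℕ} (f : Fin n → ℕ), StrictMono f → ∀ (h : m < n), m ≤ f ⟨m, h⟩ := by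
  intro m
  induction m with
  | zero => intro n f hf h; exact Nat.zero_le _
  | succ l ih =>
    intro n f hf h
    have hl : l < n := Nat.lt_of_succ_lt h
    have h1 : f ⟨l, hl⟩ < f ⟨l + 1, h⟩ := hf (by simp [Fin.lt_def])
    have h2 := ih f hf hl
    omega

lemma card_filter_lt {d k : ℕ} (hkd : k ≤ d) :
    (Finset.univ.filter (fun i : Fin d => (i:ℕ) < k)).card = k := by
  apply Finset.card_eq_of_bijective (fun i h => ⟨i, lt_of_lt_of_le h hkd⟩)
  · intro a ha
    simp only [Finset.mem_filter] at ha
    exact ⟨a, ha.2, rfl⟩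
  · intro i h; simp [h]
  · intro i j hi hj hij
    simpa using congrArg Fin.val hij

lemma sum_anti_le {d k : ℕ} (hkd : k ≤ d) (h : Fin d → ℝ) (hpos : ∀ i, 0 ≤ h i)
    (hanti : Antitone h) (T : Finset (Fin d)) (hT : T.card ≤ k) :
    ∑ i ∈ T, h i ≤ ∑ i ∈ Finset.univ.filter (fun i : Fin d => (i:ℕ) < k), h i := by
  have hn : T.card ≤ d := hT.trans hkd
  set e := T.orderEmbOfFin rfl with he
  have himg : Finset.univ.image (fun j => (e j : Fin d)) = T := by
    ext x
    simp only [Finset.mem_image, Finset.mem_univ, true_and]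
    constructor
    · rintro ⟨j, rfl⟩; exact T.orderEmbOfFin_mem rfl j
    · intro hx
      have : x ∈ Set.range (T.orderEmbOfFin rfl) := by
        rw [Finset.range_orderEmbOfFin]; exact hx
      obtain ⟨j, hj⟩ := this
      exact ⟨j, hj⟩
  have hsum : ∑ i ∈ T, h i = ∑ j : Fin T.card, h (e j) := by
    conv_lhs => rw [← himg]
    rw [Finset.sum_image (fun a _ b _ hab => e.injective hab)]
  rw [hsum]
  have step1 : ∑ j : Fin T.card, h (e j) ≤ ∑ j : Fin T.card, h ⟨j.1, lt_of_lt_of_le j.2 hn⟩ := by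
    apply Finset.sum_le_sum
    intro j _
    apply hanti
    exact nat_le_apply j.1 (fun i => ((e i : Fin d) : ℕ))
      (fun a b hab => e.strictMono hab) j.2
  refine step1.trans ?_
  have step2 : ∑ j : Fin T.card, h ⟨j.1, lt_of_lt_of_le j.2 hn⟩ =
      ∑ i ∈ Finset.univ.filter (fun i : Fin d => (i:ℕ) < T.card), h i := by
    refine Finset.sum_bij (fun (j : Fin T.card) _ => (⟨j.1, lt_of_lt_of_le j.2 hn⟩ : Fin d))
      ?_ ?_ ?_ ?_
    · intro j _; simp [j.2]
    · intro a _ b _ hab; exact Fin.ext (by simpa using congrArg Fin.val hab)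
    · intro i hi
      simp only [Finset.mem_filter] at hi
      exact ⟨⟨i.1, hi.2⟩, Finset.mem_univ _, rfl⟩
    · intro j _; rfl
  rw [step2]
  apply Finset.sum_le_sum_of_subset_of_nonneg
  · intro i hi
    simp only [Finset.mem_filter] at hi ⊢
    exact ⟨hi.1, lt_of_lt_of_le hi.2 hT⟩
  · intro i _ _; exact hpos i

lemma anti_sorted {d : ℕ} (c : Fin d → ℂ) : Antitone (sortedAbsSq c) := by
  intro a b hab
  have := Tuple.monotone_sort (fun j => -‖c j‖ ^ 2) hab
  simp only [Function.comp_apply] at this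
  unfold sortedAbsSq
  linarith

lemma sum_sq_le_topk {d k : ℕ} (c : Fin d → ℂ) (hkd : k ≤ d)
    (S : Finset (Fin d)) (hS : S.card ≤ k) :
    ∑ i ∈ S, ‖c i‖ ^ 2 ≤ topk c k := by
  set π := Tuple.sort (fun j => -‖c j‖ ^ 2) with hπ
  have key : ∑ i ∈ S, ‖c i‖ ^ 2 = ∑ i ∈ S.image π.symm, sortedAbsSq c i := by
    rw [Finset.sum_image (fun a _ b _ hab => π.symm.injective hab)]
    apply Finset.sum_congr rfl
    intro i _
    unfold sortedAbsSq
    rw [← hπ, Equiv.apply_symm_apply]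
  rw [key]
  apply sum_anti_le hkd _ (fun i => sq_nonneg _) (anti_sorted c)
  rw [Finset.card_image_of_injective _ π.symm.injective]
  exact hS

/-- For a unit vector `ψ` with coefficients `c` and any pure state `φ` of coherence rank
at most `k`, `|⟨φ|ψ⟩|² ≤ Σ_{i=1}^k |c_i↓|²`; and the bound is attained. -/
theorem stmt_14 {d k : ℕ} (hk : 1 ≤ k) (hkd : k ≤ d)
    (ψ : Fin d → ℂ) (hψ : ∑ i, ‖ψ i‖ ^ 2 = 1) :
    (∀ φ : Fin d → ℂ, (∑ i, ‖φ i‖ ^ 2 = 1) → cohRank φ ≤ k →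
        ‖dotProduct (star φ) ψ‖ ^ 2 ≤ topk ψ k) ∧
    (∃ φ : Fin d → ℂ, (∑ i, ‖φ i‖ ^ 2 = 1) ∧ cohRank φ ≤ k ∧
        ‖dotProduct (star φ) ψ‖ ^ 2 = topk ψ k) := by
  constructor
  · intro φ hφ hrank
    set S := Finset.univ.filter (fun i => φ i ≠ 0) with hS
    have hdot : dotProduct (star φ) ψ = ∑ i ∈ S, (starRingEnd ℂ) (φ i) * ψ i := by
      have h0 : dotProduct (star φ) ψ = ∑ i, (starRingEnd ℂ) (φ i) * ψ i := by
        simp [dotProduct]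
      rw [h0]
      refine (Finset.sum_subset (Finset.filter_subset _ _) ?_).symm
      intro i _ hi
      simp only [hS, Finset.mem_filter, Finset.mem_univ, true_and, not_not] at hi
      simp [hi]
    rw [hdot]
    have h1 : ‖∑ i ∈ S, (starRingEnd ℂ) (φ i) * ψ i‖ ≤ ∑ i ∈ S, ‖φ i‖ * ‖ψ i‖ := by
      refine (norm_sum_le _ _).trans ?_
      apply Finset.sum_le_sum
      intro i _
      rw [norm_mul, RCLike.norm_conj]
    have h2 : ‖∑ i ∈ S, (starRingEnd ℂ) (φ i) * ψ i‖ ^ 2 ≤ (∑ i ∈ S, ‖φ i‖ * ‖ψ i‖) ^ 2 :=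
      pow_le_pow_left₀ (norm_nonneg _) h1 2
    have h3 : (∑ i ∈ S, ‖φ i‖ * ‖ψ i‖) ^ 2 ≤ (∑ i ∈ S, ‖φ i‖ ^ 2) * (∑ i ∈ S, ‖ψ i‖ ^ 2) :=
      Finset.sum_mul_sq_le_sq_mul_sq S _ _
    have h4 : ∑ i ∈ S, ‖φ i‖ ^ 2 = 1 := by
      rw [← hφ]
      apply Finset.sum_subset (Finset.filter_subset _ _)
      intro i _ hi
      simp only [hS, Finset.mem_filter, Finset.mem_univ, true_and, not_not] at hi
      simp [hi]
    have h5 : ∑ i ∈ S, ‖ψ i‖ ^ 2 ≤ topk ψ k := sum_sq_le_topk ψ hkd S hrank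
    calc ‖∑ i ∈ S, (starRingEnd ℂ) (φ i) * ψ i‖ ^ 2
        ≤ (∑ i ∈ S, ‖φ i‖ ^ 2) * (∑ i ∈ S, ‖ψ i‖ ^ 2) := h2.trans h3
      _ = ∑ i ∈ S, ‖ψ i‖ ^ 2 := by rw [h4, one_mul]
      _ ≤ topk ψ k := h5
  · set π := Tuple.sort (fun j => -‖ψ j‖ ^ 2) with hπ
    set F := Finset.univ.filter (fun i : Fin d => (i : ℕ) < k) with hF
    set S := F.image π with hSdef
    have hcardS : S.card = k := by
      rw [hSdef, Finset.card_image_of_injective _ π.injective, card_filter_lt hkd]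
    have hTS : ∑ i ∈ S, ‖ψ i‖ ^ 2 = topk ψ k := by
      rw [hSdef, Finset.sum_image (fun a _ b _ hab => π.injective hab)]
      rfl
    set T := topk ψ k with hTdef
    have hT0 : 0 ≤ T := by
      rw [← hTS]
      exact Finset.sum_nonneg fun i _ => sq_nonneg _
    have hd0 : 0 < d := lt_of_lt_of_le hk hkd
    have hTpos : 0 < T := by
      rcases lt_or_eq_of_le hT0 with h | h
      · exact h
      have hzero : ∀ i ∈ F, sortedAbsSq ψ i = 0 := by
        intro i hi
        have := Finset.sum_eq_zero_iff_of_nonneg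
          (fun i _ => sq_nonneg (‖ψ (Tuple.sort (fun j => -‖ψ j‖ ^ 2) i)‖)) |>.mp h.symm
        exact this i hi
      have h0mem : (⟨0, hd0⟩ : Fin d) ∈ F := by simp only [hF, Finset.mem_filter, Finset.mem_univ, true_and]; omega
      have hall : ∀ i : Fin d, sortedAbsSq ψ i = 0 := by
        intro i
        have h1 : sortedAbsSq ψ i ≤ sortedAbsSq ψ ⟨0, hd0⟩ :=
          anti_sorted ψ (by simp [Fin.le_def])
        have h2 := hzero _ h0mem
        have h3 : 0 ≤ sortedAbsSq ψ i := sq_nonneg _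
        linarith
      have hsum0 : ∑ i, ‖ψ i‖ ^ 2 = 0 := by
        rw [← Equiv.sum_comp π (fun i => ‖ψ i‖ ^ 2)]
        exact Finset.sum_eq_zero fun i _ => hall i
      rw [hψ] at hsum0
      norm_num at hsum0
    have hsqrt : Real.sqrt T ≠ 0 := ne_of_gt (Real.sqrt_pos.mpr hTpos)
    refine ⟨fun i => if i ∈ S then (Real.sqrt T : ℂ)⁻¹ * ψ i else 0, ?_, ?_, ?_⟩
    · have : ∀ i : Fin d, ‖if i ∈ S then (Real.sqrt T : ℂ)⁻¹ * ψ i else 0‖ ^ 2 =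
          if i ∈ S then T⁻¹ * ‖ψ i‖ ^ 2 else 0 := by
        intro i
        by_cases hi : i ∈ S
        · simp only [hi, if_true, norm_mul, norm_inv, Complex.norm_real,
            Real.norm_eq_abs, abs_of_nonneg (Real.sqrt_nonneg T)]
          rw [mul_pow, inv_pow, Real.sq_sqrt hT0]
        · simp [hi]
      simp only [this]
      rw [Finset.sum_ite_mem, Finset.univ_inter, ← Finset.mul_sum, hTS]
      exact inv_mul_cancel₀ (ne_of_gt hTpos)
    · unfold cohRank
      rw [← hcardS]
      apply Finset.card_le_card
      intro i hi
      simp only [Finset.mem_filter, Finset.mem_univ, true_and] at hi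
      by_contra hmem
      exact hi (by simp [hmem])
    · have hdot : dotProduct (star (fun i => if i ∈ S then (Real.sqrt T : ℂ)⁻¹ * ψ i else 0)) ψ
          = (Real.sqrt T : ℂ)⁻¹ * (T : ℂ) := by
        have h0 : dotProduct (star (fun i => if i ∈ S then (Real.sqrt T : ℂ)⁻¹ * ψ i else 0)) ψ
            = ∑ i, (starRingEnd ℂ) (if i ∈ S then (Real.sqrt T : ℂ)⁻¹ * ψ i else 0) * ψ i := by
          simp [dotProduct]
        rw [h0]
        have h1 : ∀ i : Fin d, (starRingEnd ℂ) (if i ∈ S then (Real.sqrt T : ℂ)⁻¹ * ψ i else 0) * ψ i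
            = if i ∈ S then (Real.sqrt T : ℂ)⁻¹ * ((‖ψ i‖ ^ 2 : ℝ) : ℂ) else 0 := by
          intro i
          by_cases hi : i ∈ S
          · simp only [hi, if_true]
            rw [_root_.map_mul, map_inv₀, Complex.conj_ofReal, mul_assoc,
              ← Complex.normSq_eq_conj_mul_self, Complex.normSq_eq_norm_sq]
          · simp [hi]
        simp only [h1]
        rw [Finset.sum_ite_mem, Finset.univ_inter, ← Finset.mul_sum, ← Complex.ofReal_sum, hTS]
      rw [hdot]
      rw [norm_mul, norm_inv, Complex.norm_real, Real.norm_eq_abs,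
        abs_of_nonneg (Real.sqrt_nonneg T), Complex.norm_real, Real.norm_eq_abs,
        abs_of_nonneg hT0]
      rw [mul_pow, inv_pow, Real.sq_sqrt hT0]
      field_simp
end
end

section
/- For the noisy maximally coherent state ρ(p) = (1−p) I/d + p |ψ_d⁺⟩⟨ψ_d⁺|, the robustness of (k+1)-level coherence equals max{0, (p(d−1)−(k−1))/k}. In particular, ρ(p) ∈ C_k iff p ≤ (k−1)/(d−1). -/
open Matrix BigOperators ComplexOrder

noncomputable section

/-- the maximally coherent state `|ψ_d⁺⟩ = d^{-1/2} Σ_i |i⟩` -/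
def psiPlus (d : ℕ) : Fin d → ℂ := fun _ => ((Real.sqrt d)⁻¹ : ℝ)

/-! ### Auxiliary definitions and lemmas -/

lemma pureProj_apply {d : ℕ} (v : Fin d → ℂ) (i j : Fin d) :
    pureProj v i j = v i * (starRingEnd ℂ) (v j) := by
  simp [pureProj, Matrix.vecMulVec_apply, Pi.star_apply, Complex.star_def]

lemma pureProj_psiPlus {d : ℕ} (hd : 0 < d) (i j : Fin d) :
    pureProj (psiPlus d) i j = ((d:ℝ)⁻¹ : ℂ) := by
  simp [pureProj, Matrix.vecMulVec_apply, Pi.star_apply, Complex.star_def, psiPlus,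
    Complex.conj_ofReal, ← Complex.ofReal_mul, ← mul_inv,
    Real.mul_self_sqrt (by positivity : (0:ℝ) ≤ (d:ℝ))]

/-- noisy maximally coherent state -/
def rho (d : ℕ) (q : ℝ) : Matrix (Fin d) (Fin d) ℂ :=
  ((1 - q) / d) • (1 : Matrix (Fin d) (Fin d) ℂ) + q • pureProj (psiPlus d)

lemma rho_apply {d : ℕ} (hd : 0 < d) (q : ℝ) (i j : Fin d) :
    rho d q i j = (((1-q)/d * (if i = j then 1 else 0) + q/d : ℝ) : ℂ) := by
  simp only [rho, Matrix.add_apply, Matrix.smul_apply, Matrix.one_apply,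
    pureProj_psiPlus hd, Complex.real_smul]
  push_cast
  split_ifs <;> push_cast <;> ring

/-- the witness functional: real part of the sum of all entries -/
def Fc {d : ℕ} (M : Matrix (Fin d) (Fin d) ℂ) : ℝ := (∑ i, ∑ j, M i j).re

lemma Fc_pureProj {d : ℕ} (v : Fin d → ℂ) : Fc (pureProj v) = ‖∑ i, v i‖ ^ 2 := by
  simp only [Fc, pureProj_apply]
  rw [show (∑ i, ∑ j, v i * (starRingEnd ℂ) (v j)) = (∑ i, v i) * (starRingEnd ℂ) (∑ j, v j) by
    rw [map_sum, Finset.sum_mul_sum]]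
  rw [Complex.mul_conj]
  rw [Complex.normSq_eq_norm_sq, Complex.ofReal_re]

lemma Fc_gen_le {d k : ℕ} {v : Fin d → ℂ} (hnorm : ∑ i, ‖v i‖ ^ 2 = 1)
    (hrank : cohRank v ≤ k) : Fc (pureProj v) ≤ k := by
  rw [Fc_pureProj]
  set s := Finset.univ.filter (fun i => v i ≠ 0) with hs
  have h1 : (∑ i, v i) = ∑ i ∈ s, v i := (Finset.sum_filter_ne_zero _).symm
  have h2 : ‖∑ i ∈ s, v i‖ ≤ ∑ i ∈ s, ‖v i‖ := norm_sum_le _ _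
  have h3 : (∑ i ∈ s, ‖v i‖) ^ 2 ≤ s.card * ∑ i ∈ s, ‖v i‖ ^ 2 :=
    sq_sum_le_card_mul_sum_sq
  have h4 : (∑ i ∈ s, ‖v i‖ ^ 2) ≤ 1 := by
    rw [← hnorm]
    exact Finset.sum_le_sum_of_subset_of_nonneg (Finset.filter_subset _ _)
      (fun i _ _ => by positivity)
  calc ‖∑ i, v i‖ ^ 2 = ‖∑ i ∈ s, v i‖ ^ 2 := by rw [h1]
    _ ≤ (∑ i ∈ s, ‖v i‖) ^ 2 := by
        apply pow_le_pow_left₀ (norm_nonneg _) h2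
    _ ≤ s.card * ∑ i ∈ s, ‖v i‖ ^ 2 := h3
    _ ≤ k * 1 := by
        apply mul_le_mul _ h4 (by positivity) (by positivity)
        exact_mod_cast hrank
    _ = k := mul_one _

lemma Fc_add {d : ℕ} (M N : Matrix (Fin d) (Fin d) ℂ) : Fc (M + N) = Fc M + Fc N := by
  simp [Fc, Finset.sum_add_distrib]

lemma Fc_smul {d : ℕ} (r : ℝ) (M : Matrix (Fin d) (Fin d) ℂ) : Fc (r • M) = r * Fc M := by
  simp only [Fc, Matrix.smul_apply, Complex.real_smul, Complex.re_sum, Complex.mul_re,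
    Complex.ofReal_re, Complex.ofReal_im, zero_mul, sub_zero, Finset.mul_sum]

lemma Fc_Ck_le {d k : ℕ} {M : Matrix (Fin d) (Fin d) ℂ} (h : M ∈ Ck d k) : Fc M ≤ k := by
  have hmin := convexHull_min (show
      {M : Matrix (Fin d) (Fin d) ℂ | ∃ v : Fin d → ℂ,
        (∑ i, ‖v i‖ ^ 2 = 1) ∧ cohRank v ≤ k ∧ M = pureProj v} ⊆ {M | Fc M ≤ k} by
    rintro M ⟨v, h1, h2, rfl⟩
    exact Fc_gen_le h1 h2)
    (convex_halfSpace_le (⟨Fc_add, Fc_smul⟩ : IsLinearMap ℝ (Fc (d := d))) (k:ℝ))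
  exact hmin h

lemma Fc_psd {d : ℕ} {τ : Matrix (Fin d) (Fin d) ℂ} (h : τ.PosSemidef) : 0 ≤ Fc τ := by
  have hq := h.dotProduct_mulVec_nonneg (fun _ => 1)
  have heq : dotProduct (star (fun _ => (1:ℂ))) (τ *ᵥ (fun _ => 1)) = ∑ i, ∑ j, τ i j := by
    simp [dotProduct, Matrix.mulVec, Finset.mul_sum]
  rw [heq] at hq
  exact (Complex.le_def.1 hq).1

lemma Fc_rho {d : ℕ} (hd : 0 < d) (q : ℝ) : Fc (rho d q) = 1 - q + q * d := by
  have hDne : ((d:ℝ)) ≠ 0 := by positivity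
  simp only [Fc, rho_apply hd, Complex.re_sum, Complex.ofReal_re]
  have hrow : ∀ i : Fin d, ∑ j, ((1-q)/(d:ℝ) * (if i = j then 1 else 0) + q/d)
      = (1-q)/(d:ℝ) + (d:ℝ) * (q/d) := by
    intro i
    rw [Finset.sum_add_distrib, Finset.sum_const, Finset.card_univ, Fintype.card_fin,
      ← Finset.mul_sum, Finset.sum_ite_eq, if_pos (Finset.mem_univ i), nsmul_eq_mul, mul_one]
  simp_rw [hrow]
  rw [Finset.sum_const, Finset.card_univ, Fintype.card_fin, nsmul_eq_mul]
  field_simp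

/-- the mixing state -/
def tau0 (d : ℕ) : Matrix (Fin d) (Fin d) ℂ :=
  ((d:ℝ)-1)⁻¹ • ((1 : Matrix (Fin d) (Fin d) ℂ) - pureProj (psiPlus d))

lemma tau0_apply {d : ℕ} (hd0 : 0 < d) (i j : Fin d) :
    tau0 d i j = ((((d:ℝ)-1)⁻¹ * ((if i=j then 1 else 0) - (d:ℝ)⁻¹)) : ℝ) := by
  simp only [tau0, Matrix.smul_apply, Matrix.sub_apply, Matrix.one_apply,
    pureProj_psiPlus hd0, Complex.real_smul]
  push_cast
  split_ifs <;> push_cast <;> ring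

lemma tau0_density {d : ℕ} (hd : 2 ≤ d) : IsDensity (tau0 d) := by
  have hd0 : 0 < d := by omega
  have hD : (0:ℝ) < (d:ℝ) := by exact_mod_cast hd0
  have hD1 : (0:ℝ) < (d:ℝ) - 1 := by
    have : (2:ℝ) ≤ d := by exact_mod_cast hd
    linarith
  constructor
  · refine Matrix.PosSemidef.of_dotProduct_mulVec_nonneg ?_ ?_
    · ext i j
      rw [Matrix.conjTranspose_apply, tau0_apply hd0, tau0_apply hd0, Complex.star_def, Complex.conj_ofReal]
      norm_num [eq_comm]
    · intro x
      have hW : pureProj (psiPlus d) *ᵥ x = fun _ => ((d:ℝ)⁻¹:ℂ) * ∑ j, x j := by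
        funext i
        simp [Matrix.mulVec, dotProduct, pureProj_psiPlus hd0, Finset.mul_sum]
      have h1 : dotProduct (star x) x = ((∑ i, Complex.normSq (x i) : ℝ) : ℂ) := by
        simp only [dotProduct, Pi.star_apply, Complex.star_def]
        push_cast
        exact Finset.sum_congr rfl fun i _ => by rw [mul_comm, Complex.mul_conj]
      have h2 : dotProduct (star x) (fun _ => ((d:ℝ)⁻¹:ℂ) * ∑ j, x j)
          = ((d:ℝ)⁻¹:ℂ) * ((Complex.normSq (∑ i, x i) : ℝ) : ℂ) := by
        simp only [dotProduct, Pi.star_apply, Complex.star_def]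
        rw [← Finset.sum_mul, ← map_sum, mul_left_comm,
          mul_comm ((starRingEnd ℂ) (∑ i, x i)) (∑ i, x i), Complex.mul_conj]
      have key : dotProduct (star x) (tau0 d *ᵥ x)
          = ((((d:ℝ)-1)⁻¹ * ((∑ i, Complex.normSq (x i)) - (d:ℝ)⁻¹ * Complex.normSq (∑ i, x i)) : ℝ) : ℂ) := by
        rw [tau0, Matrix.smul_mulVec, Matrix.sub_mulVec, Matrix.one_mulVec, hW,
          dotProduct_smul, dotProduct_sub, h1, h2, Complex.real_smul]
        push_cast
        ring
      rw [key]
      rw [Complex.zero_le_real]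
      have hcs : Complex.normSq (∑ i, x i) ≤ (d:ℝ) * ∑ i, Complex.normSq (x i) := by
        have e1 : Complex.normSq (∑ i, x i) = ‖∑ i, x i‖ ^ 2 := by
          rw [Complex.normSq_eq_norm_sq]
        have e2 : ∀ i, Complex.normSq (x i) = ‖x i‖ ^ 2 := fun i => by
          rw [Complex.normSq_eq_norm_sq]
        rw [e1]
        simp_rw [e2]
        calc ‖∑ i, x i‖ ^ 2 ≤ (∑ i, ‖x i‖) ^ 2 :=
              pow_le_pow_left₀ (norm_nonneg _) (norm_sum_le _ _) 2
          _ ≤ (Finset.univ : Finset (Fin d)).card * ∑ i, ‖x i‖ ^ 2 :=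
              sq_sum_le_card_mul_sum_sq
          _ = (d:ℝ) * ∑ i, ‖x i‖ ^ 2 := by
              rw [Finset.card_univ, Fintype.card_fin]
      have : 0 ≤ (∑ i, Complex.normSq (x i)) - (d:ℝ)⁻¹ * Complex.normSq (∑ i, x i) := by
        rw [sub_nonneg, inv_mul_le_iff₀ hD]
        linarith [hcs]
      positivity
  · simp only [tau0, Matrix.trace_smul, Matrix.trace_sub, Matrix.trace_one]
    have : (pureProj (psiPlus d)).trace = ((d:ℝ)⁻¹:ℂ) * d := by
      simp [Matrix.trace, Matrix.diag, pureProj_psiPlus hd0, Finset.sum_const, mul_comm]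
    rw [this, Complex.real_smul]
    have hne : ((d:ℕ):ℂ) - 1 ≠ 0 := by
      have h2 : ((d:ℕ):ℂ) ≠ 1 := by
        have : ((d:ℕ):ℝ) ≠ 1 := by
          intro h; rw [h] at hD1; norm_num at hD1
        exact_mod_cast this
      exact sub_ne_zero_of_ne h2
    have hne0 : ((d:ℕ):ℂ) ≠ 0 := by exact_mod_cast hD.ne'
    push_cast
    field_simp
    simp

section mem
variable {d k : ℕ}

lemma identity_mem (hd : 0 < d) (hk : 1 ≤ k) : rho d 0 ∈ Ck d k := by
  have heq : (Finset.univ : Finset (Fin d)).centerMass (fun _ => (1:ℝ))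
      (fun i => pureProj (Pi.single i 1)) = rho d 0 := by
    rw [Finset.centerMass]
    ext a b
    simp only [Finset.sum_const, Finset.card_univ, Fintype.card_fin, nsmul_eq_mul, mul_one,
      Matrix.smul_apply, one_smul]
    rw [Matrix.sum_apply, rho_apply hd]
    have hPP : ∀ i : Fin d, (pureProj (Pi.single i 1)) a b
        = if a = i then (if b = i then (1:ℂ) else 0) else 0 := by
      intro i
      rw [pureProj_apply, Pi.single_apply, Pi.single_apply]
      split_ifs <;> simp
    simp_rw [hPP]
    rw [Finset.sum_ite_eq (Finset.univ : Finset (Fin d)) a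
      (fun i => if b = i then (1:ℂ) else 0)]
    simp only [Finset.mem_univ, if_true]
    by_cases hab : b = a
    · subst hab
      rw [if_pos rfl, if_pos rfl, Complex.real_smul]
      push_cast
      have hdd : ((d:ℝ)) ≠ 0 := by positivity
      field_simp
      norm_num
    · rw [if_neg hab, if_neg (fun h => hab h.symm)]
      simp
  unfold Ck
  rw [← heq]
  apply Finset.centerMass_mem_convexHull
  · exact fun i _ => zero_le_one
  · rw [Finset.sum_const, Finset.card_univ, Fintype.card_fin, nsmul_eq_mul, mul_one]
    exact_mod_cast hd
  · intro i _
    refine Set.mem_setOf.2 ⟨Pi.single i 1, ?_, ?_, rfl⟩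
    · simp [Pi.single_apply, apply_ite]
    · have h5 : (Finset.univ.filter (fun j => (Pi.single i 1 : Fin d → ℂ) j ≠ 0)) = {i} := by
        ext j
        simp [Pi.single_apply]
      simp only [cohRank, h5, Finset.card_singleton]
      exact hk

lemma card_filter_one_s17 {d k : ℕ} (hk : 1 ≤ k) (i : Fin d) :
    ((Finset.powersetCard k (Finset.univ : Finset (Fin d))).filter (fun S => i ∈ S)).card
      = (d-1).choose (k-1) := by
  have hcard : (Finset.powersetCard (k-1) ((Finset.univ:Finset (Fin d)).erase i)).card
      = (d-1).choose (k-1) := by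
    rw [Finset.card_powersetCard, Finset.card_erase_of_mem (Finset.mem_univ i),
      Finset.card_univ, Fintype.card_fin]
  rw [← hcard]
  apply Finset.card_nbij' (fun S => S.erase i) (fun T => insert i T)
  · intro S hS
    simp only [Finset.mem_coe, Finset.mem_filter, Finset.mem_powersetCard] at hS ⊢
    obtain ⟨⟨hsub, hcard⟩, hmem⟩ := hS
    exact ⟨Finset.erase_subset_erase i hsub,
      by rw [Finset.card_erase_of_mem hmem, hcard]⟩
  · intro T hT
    rw [Finset.mem_coe, Finset.mem_powersetCard] at hT
    obtain ⟨hsub, hcard⟩ := hT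
    have hiT : i ∉ T := fun h => (Finset.mem_erase.1 (hsub h)).1 rfl
    simp only [Finset.mem_coe, Finset.mem_filter, Finset.mem_powersetCard]
    refine ⟨⟨Finset.subset_univ _, ?_⟩, Finset.mem_insert_self i T⟩
    rw [Finset.card_insert_of_notMem hiT, hcard]
    omega
  · intro S hS
    simp only [Finset.mem_coe, Finset.mem_filter] at hS
    exact Finset.insert_erase hS.2
  · intro T hT
    rw [Finset.mem_coe, Finset.mem_powersetCard] at hT
    have hiT : i ∉ T := fun h => (Finset.mem_erase.1 (hT.1 h)).1 rfl
    exact Finset.erase_insert hiT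

lemma card_filter_two_s17 {d k : ℕ} (hk : 2 ≤ k) {i j : Fin d} (hij : i ≠ j) :
    ((Finset.powersetCard k (Finset.univ : Finset (Fin d))).filter
      (fun S => i ∈ S ∧ j ∈ S)).card = (d-2).choose (k-2) := by
  have hcard : (Finset.powersetCard (k-2) (((Finset.univ:Finset (Fin d)).erase i).erase j)).card
      = (d-2).choose (k-2) := by
    rw [Finset.card_powersetCard, Finset.card_erase_of_mem
      (Finset.mem_erase.2 ⟨hij.symm, Finset.mem_univ j⟩),
      Finset.card_erase_of_mem (Finset.mem_univ i), Finset.card_univ, Fintype.card_fin]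
    congr 1
  rw [← hcard]
  apply Finset.card_nbij' (fun S => (S.erase i).erase j) (fun T => insert i (insert j T))
  · intro S hS
    simp only [Finset.mem_coe, Finset.mem_filter, Finset.mem_powersetCard] at hS
    obtain ⟨⟨hsub, hcard'⟩, hi, hj⟩ := hS
    refine Finset.mem_powersetCard.2 ⟨Finset.erase_subset_erase j
      (Finset.erase_subset_erase i hsub), ?_⟩
    rw [Finset.card_erase_of_mem (Finset.mem_erase.2 ⟨hij.symm, hj⟩),
      Finset.card_erase_of_mem hi, hcard']
    omega
  · intro T hT
    rw [Finset.mem_coe, Finset.mem_powersetCard] at hT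
    obtain ⟨hsub, hcardT⟩ := hT
    have hjT : j ∉ T := fun h => (Finset.mem_erase.1 (hsub h)).1 rfl
    have hiT : i ∉ T := fun h => (Finset.mem_erase.1 (Finset.mem_erase.1 (hsub h)).2).1 rfl
    have hinj : i ∉ insert j T := by
      simp only [Finset.mem_insert]
      rintro (h | h)
      · exact hij h
      · exact hiT h
    simp only [Finset.mem_coe, Finset.mem_filter, Finset.mem_powersetCard]
    refine ⟨⟨Finset.subset_univ _, ?_⟩, Finset.mem_insert_self i _,
      Finset.mem_insert_of_mem (Finset.mem_insert_self j T)⟩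
    rw [Finset.card_insert_of_notMem hinj, Finset.card_insert_of_notMem hjT, hcardT]
    omega
  · intro S hS
    simp only [Finset.mem_coe, Finset.mem_filter] at hS
    obtain ⟨_, hi, hj⟩ := hS
    beta_reduce
    rw [Finset.insert_erase (Finset.mem_erase.2 ⟨hij.symm, hj⟩), Finset.insert_erase hi]
  · intro T hT
    rw [Finset.mem_coe, Finset.mem_powersetCard] at hT
    have hjT : j ∉ T := fun h => (Finset.mem_erase.1 (hT.1 h)).1 rfl
    have hiT : i ∉ T := fun h => (Finset.mem_erase.1 (Finset.mem_erase.1 (hT.1 h)).2).1 rfl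
    have hinj : i ∉ insert j T := by
      simp only [Finset.mem_insert]
      rintro (h | h)
      · exact hij h
      · exact hiT h
    beta_reduce
    rw [Finset.erase_insert hinj, Finset.erase_insert hjT]

lemma rho_pstar_mem (hd : 2 ≤ d) (hk2 : 2 ≤ k) (hkd : k ≤ d) :
    rho d (((k:ℝ)-1)/((d:ℝ)-1)) ∈ Ck d k := by
  have hd0 : 0 < d := by omega
  have hk0 : 0 < k := by omega
  have hC : 0 < d.choose k := Nat.choose_pos hkd
  set t := Finset.powersetCard k (Finset.univ : Finset (Fin d)) with ht
  set vS : Finset (Fin d) → (Fin d → ℂ) :=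
    fun S => (fun i => if i ∈ S then (((Real.sqrt k)⁻¹ : ℝ) : ℂ) else 0) with hvS
  have hcardt : t.card = d.choose k := by
    rw [ht, Finset.card_powersetCard, Finset.card_univ, Fintype.card_fin]
  have hsqk : ((Real.sqrt k)⁻¹ : ℝ) * ((Real.sqrt k)⁻¹ : ℝ) = (k:ℝ)⁻¹ := by
    rw [← mul_inv, Real.mul_self_sqrt (by positivity)]
  have hentry : ∀ S ∈ t, ∀ a b : Fin d, pureProj (vS S) a b
      = if a ∈ S ∧ b ∈ S then (((k:ℝ)⁻¹ : ℝ) : ℂ) else 0 := by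
    intro S _ a b
    rw [pureProj_apply, hvS]
    simp only
    by_cases ha : a ∈ S <;> by_cases hb : b ∈ S
    · rw [if_pos ha, if_pos hb, if_pos ⟨ha, hb⟩, Complex.conj_ofReal,
        ← Complex.ofReal_mul, hsqk]
    · rw [if_pos ha, if_neg hb, if_neg (fun h => hb h.2)]
      simp
    · rw [if_neg ha, if_pos hb, if_neg (fun h => ha h.1)]
      simp
    · rw [if_neg ha, if_neg hb, if_neg (fun h => ha h.1)]
      simp
  have hmix : t.centerMass (fun _ => (1:ℝ)) (fun S => pureProj (vS S))
      = rho d (((k:ℝ)-1)/((d:ℝ)-1)) := by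
    rw [Finset.centerMass]
    ext a b
    rw [Finset.sum_const, hcardt, nsmul_eq_mul, mul_one, Matrix.smul_apply, Matrix.sum_apply,
      rho_apply hd0]
    simp only [one_smul]
    rw [Finset.sum_congr rfl (fun S hS => hentry S hS a b)]
    rw [Finset.sum_ite, Finset.sum_const_zero, add_zero, Finset.sum_const, nsmul_eq_mul]
    have hDne : ((d:ℝ)) ≠ 0 := by positivity
    have hD1ne : ((d:ℝ)) - 1 ≠ 0 := by
      have : (2:ℝ) ≤ (d:ℝ) := by exact_mod_cast hd
      intro h; linarith
    have hKne : ((k:ℝ)) ≠ 0 := by positivity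
    have hCne : ((d.choose k : ℝ)) ≠ 0 := by positivity
    by_cases hab : a = b
    · subst hab
      have hfilter : t.filter (fun S => a ∈ S ∧ a ∈ S) = t.filter (fun S => a ∈ S) := by
        apply Finset.filter_congr
        intro S _
        simp
      rw [hfilter, card_filter_one_s17 (by omega) a, Complex.real_smul]
      have hNat1 : d * (d-1).choose (k-1) = d.choose k * k := by
        have h := Nat.add_one_mul_choose_eq (d-1) (k-1)
        have e1 : d - 1 + 1 = d := by omega
        have e2 : k - 1 + 1 = k := by omega
        rw [e1, e2] at h
        exact h
      have hR1 : ((d:ℝ)) * ((d-1).choose (k-1) : ℝ) = (d.choose k : ℝ) * (k:ℝ) := by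
        exact_mod_cast hNat1
      rw [if_pos rfl]
      have hreal : ((d.choose k : ℝ))⁻¹ * (((d-1).choose (k-1) : ℝ) * (k:ℝ)⁻¹)
          = (1 - ((k:ℝ)-1)/((d:ℝ)-1))/(d:ℝ) * 1 + (((k:ℝ)-1)/((d:ℝ)-1))/(d:ℝ) := by
        field_simp
        nlinarith [hR1]
      rw [← hreal]
      push_cast
      ring
    · rw [card_filter_two_s17 hk2 hab, Complex.real_smul]
      have hNat1 : (d-1) * (d-2).choose (k-2) = (d-1).choose (k-1) * (k-1) := by
        have h := Nat.add_one_mul_choose_eq (d-2) (k-2)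
        have e1 : d - 2 + 1 = d-1 := by omega
        have e2 : k - 2 + 1 = k-1 := by omega
        rw [e1, e2] at h
        exact h
      have hNat2 : d * (d-1).choose (k-1) = d.choose k * k := by
        have h := Nat.add_one_mul_choose_eq (d-1) (k-1)
        have e1 : d - 1 + 1 = d := by omega
        have e2 : k - 1 + 1 = k := by omega
        rw [e1, e2] at h
        exact h
      have hc1 : (((d-1) : ℕ) : ℝ) = (d:ℝ) - 1 := by
        push_cast [Nat.cast_sub (by omega : 1 ≤ d)]; ring
      have hc2 : (((k-1) : ℕ) : ℝ) = (k:ℝ) - 1 := by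
        push_cast [Nat.cast_sub (by omega : 1 ≤ k)]; ring
      have hR1 : ((d:ℝ) - 1) * ((d-2).choose (k-2) : ℝ)
          = ((d-1).choose (k-1) : ℝ) * ((k:ℝ) - 1) := by
        rw [← hc1, ← hc2]
        exact_mod_cast hNat1
      have hR2 : ((d:ℝ)) * ((d-1).choose (k-1) : ℝ) = (d.choose k : ℝ) * (k:ℝ) := by
        exact_mod_cast hNat2
      rw [if_neg hab]
      have key : (d:ℝ) * ((d:ℝ)-1) * ((d-2).choose (k-2) : ℝ)
          = (d.choose k : ℝ) * (k:ℝ) * ((k:ℝ)-1) := by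
        calc (d:ℝ) * ((d:ℝ)-1) * ((d-2).choose (k-2) : ℝ)
            = (d:ℝ) * (((d:ℝ)-1) * ((d-2).choose (k-2) : ℝ)) := by ring
          _ = (d:ℝ) * (((d-1).choose (k-1) : ℝ) * ((k:ℝ)-1)) := by rw [hR1]
          _ = ((d:ℝ) * ((d-1).choose (k-1) : ℝ)) * ((k:ℝ)-1) := by ring
          _ = ((d.choose k : ℝ) * (k:ℝ)) * ((k:ℝ)-1) := by rw [hR2]
          _ = (d.choose k : ℝ) * (k:ℝ) * ((k:ℝ)-1) := by ring
      have hreal : ((d.choose k : ℝ))⁻¹ * (((d-2).choose (k-2) : ℝ) * (k:ℝ)⁻¹)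
          = (1 - ((k:ℝ)-1)/((d:ℝ)-1))/(d:ℝ) * 0 + (((k:ℝ)-1)/((d:ℝ)-1))/(d:ℝ) := by
        field_simp
        nlinarith [key]
      rw [← hreal]
      push_cast
      ring
  unfold Ck
  rw [← hmix]
  apply Finset.centerMass_mem_convexHull
  · exact fun S _ => zero_le_one
  · rw [Finset.sum_const, hcardt, nsmul_eq_mul, mul_one]
    exact_mod_cast hC
  · intro S hS
    have hScard : S.card = k := (Finset.mem_powersetCard.1 hS).2
    refine Set.mem_setOf.2 ⟨vS S, ?_, ?_, rfl⟩
    · rw [hvS]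
      simp only
      have hterm : ∀ i : Fin d,
          ‖(if i ∈ S then (((Real.sqrt k)⁻¹:ℝ):ℂ) else 0)‖^2 = if i ∈ S then (k:ℝ)⁻¹ else 0 := by
        intro i
        split_ifs with h
        · rw [Complex.norm_real, Real.norm_eq_abs, abs_of_nonneg (by positivity), sq, hsqk]
        · simp
      simp_rw [hterm]
      rw [Finset.sum_ite_mem, Finset.univ_inter, Finset.sum_const, hScard, nsmul_eq_mul]
      have hKne : ((k:ℝ)) ≠ 0 := by positivity
      field_simp
    · have hfil : (Finset.univ.filter (fun i => vS S i ≠ 0)) = S := by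
        ext i
        rw [hvS]
        simp only [Finset.mem_filter, Finset.mem_univ, true_and, ne_eq]
        split_ifs with h
        · simp only [h, iff_true]
          intro hz
          rw [Complex.ofReal_eq_zero, inv_eq_zero] at hz
          have hpos : (0:ℝ) < Real.sqrt k := Real.sqrt_pos.2 (by exact_mod_cast hk0)
          exact hpos.ne' hz
        · simp [h]
      rw [cohRank, hfil, hScard]

lemma rho_mem (hd : 2 ≤ d) (hk : 1 ≤ k) (hkd : k ≤ d) {q : ℝ} (hq0 : 0 ≤ q)
    (hq : q ≤ ((k:ℝ)-1)/((d:ℝ)-1)) : rho d q ∈ Ck d k := by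
  have hd0 : 0 < d := by omega
  have hD1 : (0:ℝ) < (d:ℝ) - 1 := by
    have : (2:ℝ) ≤ (d:ℝ) := by exact_mod_cast hd
    linarith
  rcases eq_or_lt_of_le hk with hk1 | hk2
  · have hps0 : ((k:ℝ)-1)/((d:ℝ)-1) = 0 := by
      rw [← hk1]
      norm_num
    have hq' : q = 0 := le_antisymm (hps0 ▸ hq) hq0
    rw [hq']
    exact identity_mem hd0 hk
  · have hk2' : 2 ≤ k := hk2
    by_cases hq0' : q = 0
    · rw [hq0']
      exact identity_mem hd0 hk
    set pstar := ((k:ℝ)-1)/((d:ℝ)-1) with hps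
    have hK1 : (0:ℝ) < (k:ℝ) - 1 := by
      have : (2:ℝ) ≤ (k:ℝ) := by exact_mod_cast hk2'
      linarith
    have hpspos : 0 < pstar := div_pos hK1 hD1
    have hqpos : 0 < q := lt_of_le_of_ne hq0 (Ne.symm hq0')
    set a := q / pstar with ha
    have ha0 : 0 ≤ a := by positivity
    have ha1 : a ≤ 1 := by
      rw [ha, div_le_one hpspos]
      exact hq
    have haq : a * pstar = q := by
      rw [ha]
      field_simp
    have hcomb : (1 - a) • rho d 0 + a • rho d pstar = rho d q := by
      ext i j
      rw [Matrix.add_apply, Matrix.smul_apply, Matrix.smul_apply, rho_apply hd0,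
        rho_apply hd0, rho_apply hd0, Complex.real_smul, Complex.real_smul,
        ← Complex.ofReal_mul, ← Complex.ofReal_mul, ← Complex.ofReal_add,
        Complex.ofReal_inj]
      have hDne : ((d:ℝ)) ≠ 0 := by positivity
      split_ifs
      · field_simp
        ring
      · field_simp
        linarith [haq]
    rw [← hcomb]
    have hconv : Convex ℝ (Ck d k) := by
      unfold Ck
      exact convex_convexHull ℝ _
    exact hconv (identity_mem hd0 hk) (rho_pstar_mem hd hk2' hkd) (by linarith) ha0 (by ring)

end mem

lemma mix_eq {d k : ℕ} (hd : 2 ≤ d) (hk : 1 ≤ k) (p : ℝ)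
    (hs : 0 ≤ (p*((d:ℝ)-1)-((k:ℝ)-1))/(k:ℝ)) :
    ((1 + (p*((d:ℝ)-1)-((k:ℝ)-1))/(k:ℝ))⁻¹ : ℝ) •
      (rho d p + ((p*((d:ℝ)-1)-((k:ℝ)-1))/(k:ℝ)) • tau0 d)
    = rho d (((k:ℝ)-1)/((d:ℝ)-1)) := by
  have hd0 : 0 < d := by omega
  have hDne : ((d:ℝ)) ≠ 0 := by positivity
  have hKne : ((k:ℝ)) ≠ 0 := by
    have : 0 < k := hk
    positivity
  have hD1ne : ((d:ℝ)) - 1 ≠ 0 := by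
    have : (2:ℝ) ≤ (d:ℝ) := by exact_mod_cast hd
    intro h; linarith
  have h1s : (1 + (p*((d:ℝ)-1)-((k:ℝ)-1))/(k:ℝ)) ≠ 0 := by
    have : (0:ℝ) < 1 + (p*((d:ℝ)-1)-((k:ℝ)-1))/(k:ℝ) := by linarith
    exact this.ne'
  ext i j
  rw [Matrix.smul_apply, Matrix.add_apply, Matrix.smul_apply, rho_apply hd0,
    tau0_apply hd0, rho_apply hd0, Complex.real_smul, Complex.real_smul,
    ← Complex.ofReal_mul, ← Complex.ofReal_add, ← Complex.ofReal_mul, Complex.ofReal_inj]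
  split_ifs
  · rw [inv_mul_eq_iff_eq_mul₀ h1s]
    field_simp
    ring
  · rw [inv_mul_eq_iff_eq_mul₀ h1s]
    field_simp
    ring

/-- For the noisy maximally coherent state `ρ(p) = (1-p) I/d + p |ψ_d⁺⟩⟨ψ_d⁺|`, the
robustness of `(k+1)`-level coherence equals `max{0, (p(d-1)-(k-1))/k}`; in particular
`ρ(p) ∈ C_k` iff `p ≤ (k-1)/(d-1)`. -/
theorem stmt_17 {d k : ℕ} (hd : 2 ≤ d) (hk : 1 ≤ k) (hkd : k ≤ d)
    (p : ℝ) (hp0 : 0 ≤ p) (hp1 : p ≤ 1)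
    (ρ : Matrix (Fin d) (Fin d) ℂ)
    (hρdef : ρ = ((1 - p) / d) • (1 : Matrix (Fin d) (Fin d) ℂ) + p • pureProj (psiPlus d)) :
    RMC k ρ = max 0 ((p * ((d : ℝ) - 1) - ((k : ℝ) - 1)) / k) ∧
    (ρ ∈ Ck d k ↔ p ≤ ((k : ℝ) - 1) / ((d : ℝ) - 1)) := by
  have hd0 : 0 < d := by omega
  have hk0 : 0 < k := hk
  have hD : (0:ℝ) < (d:ℝ) := by exact_mod_cast hd0
  have hK : (0:ℝ) < (k:ℝ) := by exact_mod_cast hk0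
  have hD1 : (0:ℝ) < (d:ℝ) - 1 := by
    have : (2:ℝ) ≤ (d:ℝ) := by exact_mod_cast hd
    linarith
  have hK1 : (0:ℝ) ≤ (k:ℝ) - 1 := by
    have : (1:ℝ) ≤ (k:ℝ) := by exact_mod_cast hk
    linarith
  have hρ : ρ = rho d p := hρdef
  have hps0 : (0:ℝ) ≤ ((k:ℝ)-1)/((d:ℝ)-1) := div_nonneg hK1 hD1.le
  -- the iff
  have hiff : ρ ∈ Ck d k ↔ p ≤ ((k:ℝ)-1)/((d:ℝ)-1) := by
    constructor
    · intro h
      have hb := Fc_Ck_le h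
      rw [hρ, Fc_rho hd0] at hb
      rw [le_div_iff₀ hD1]
      linarith
    · intro h
      rw [hρ]
      exact rho_mem hd hk hkd hp0 h
  refine ⟨?_, hiff⟩
  -- robustness
  set s0 := (p * ((d:ℝ)-1) - ((k:ℝ)-1)) / (k:ℝ) with hs0def
  set P := {s : ℝ | 0 ≤ s ∧ ∃ τ : Matrix (Fin d) (Fin d) ℂ, IsDensity τ ∧
    ((1 + s)⁻¹ : ℝ) • (ρ + (s : ℝ) • τ) ∈ Ck d k} with hP
  have hmem : max 0 s0 ∈ P := by
    refine ⟨le_max_left _ _, tau0 d, tau0_density hd, ?_⟩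
    by_cases hple : p ≤ ((k:ℝ)-1)/((d:ℝ)-1)
    · have hs0neg : s0 ≤ 0 := by
        rw [hs0def, div_nonpos_iff]
        right
        constructor
        · rw [le_div_iff₀ hD1] at hple
          linarith
        · exact hK.le
      have hss : max 0 s0 = 0 := max_eq_left hs0neg
      rw [hss]
      simp only [zero_smul, add_zero, inv_one]
      rw [one_smul, hρ]
      exact rho_mem hd hk hkd hp0 hple
    · push_neg at hple
      have hs0pos : 0 ≤ s0 := by
        rw [hs0def]
        apply div_nonneg _ hK.le
        rw [div_lt_iff₀ hD1] at hple
        linarith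
      have hss : max 0 s0 = s0 := max_eq_right hs0pos
      rw [hss, hρ, hs0def, mix_eq hd hk p (hs0def ▸ hs0pos)]
      exact rho_mem hd hk hkd hps0 le_rfl
  have hlb : ∀ s ∈ P, max 0 s0 ≤ s := by
    rintro s ⟨hs0, τ, hτ, hmemCk⟩
    refine max_le hs0 ?_
    have h1s : (0:ℝ) < 1 + s := by linarith
    have hb := Fc_Ck_le hmemCk
    rw [Fc_smul, Fc_add, Fc_smul, hρ, Fc_rho hd0] at hb
    have hτ0 : 0 ≤ Fc τ := Fc_psd hτ.1
    rw [inv_mul_le_iff₀ h1s] at hb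
    have hfr : 1 - p + p * (d:ℝ) ≤ (k:ℝ) * (1 + s) := by
      nlinarith [mul_nonneg hs0 hτ0]
    rw [hs0def, div_le_iff₀ hK]
    linarith
  have hsEq : sInf P = max 0 s0 := le_antisymm
    (csInf_le ⟨0, fun s hs => hs.1⟩ hmem)
    (le_csInf ⟨max 0 s0, hmem⟩ hlb)
  exact hsEq
end
end
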